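/- arXiv:1304.0988 — 5 statements merged into one kernel-verified Lean document; each statement's English description precedes it below -/
import Mathlib

section
/- For integers m ≥ 0 and n ≥ 0, the sum over 0 ≤ k < n of (k choose m) · H_k equals (n choose (m+1)) · (H_n − 1/(m+1)), where H_k denotes the k-th harmonic number. -/
/-- For integers `m ≥ 0` and `n ≥ 0`,
`∑_{0 ≤ k < n} (k choose m) · H_k = (n choose (m+1)) · (H_n − 1/(m+1))`,
where `H_k` is the `k`-th harmonic number. -/
theorem sum_choose_mul_harmonic (m n : ℕ) :
    ∑ k ∈ Finset.range n, (k.choose m : ℚ) * harmonic k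
      = (n.choose (m + 1) : ℚ) * (harmonic n - 1 / (m + 1)) := by
  induction n with
  | zero => simp
  | succ n ih =>
    have key : ((n + 1 : ℕ) : ℚ) * (n.choose m : ℚ)
        = ((n + 1).choose (m + 1) : ℚ) * ((m + 1 : ℕ) : ℚ) := by
      exact_mod_cast congrArg (Nat.cast : ℕ → ℚ) (Nat.add_one_mul_choose_eq n m)
    rw [Finset.sum_range_succ, ih, harmonic_succ,
      Nat.choose_succ_succ' n m]
    rw [Nat.choose_succ_succ' n m] at key
    push_cast at key ⊢
    have hm : ((m : ℚ) + 1) ≠ 0 := by positivity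
    have hn : ((n : ℚ) + 1) ≠ 0 := by positivity
    field_simp
    linear_combination key
end

section
/- Define a sequence C_n by C_n = 0 for n ≤ 1 and C_n = a·n + b + (6/(n(n−1)))·Σ_{k=0}^{n−2}(n−k−1)·C_k for n ≥ 2, where a, b are real constants with 2a+b interpreted as the value of the toll at n=2 (i.e., the toll function is exactly a·n+b for all n ≥ 2). Then C_n = (6/5)·a·(n+1)·(H_{n+1} − H_3) + (1/5)·(n+1)·((19/5)·a + 2(b−a)) + (a−b)/2 + ((5 choose 5)·R)/ (n choose 4) for suitable constant R, for all n ≥ 4; in particular C_n = (6/5)·a·n·ln n + ((19/25)a + (6/5)(aγ + (b−a)/3 − a·H_3))·n + O(log n) as n → ∞, where γ is the Euler–Mascheroni constant. -/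
open Filter Asymptotics



noncomputable def eFun (a b : ℝ) (n : ℕ) : ℝ :=
  (6 / 5) * a * ((n : ℝ) + 1) *
      (((harmonic (n + 1) : ℚ) : ℝ) - ((harmonic 3 : ℚ) : ℝ))
    + (1 / 5) * ((n : ℝ) + 1) * ((19 / 5) * a + 2 * (b - a))
    + (a - b) / 2

lemma harm_cast_succ (n : ℕ) :
    ((harmonic (n + 1) : ℚ) : ℝ) = ((harmonic n : ℚ) : ℝ) + 1 / ((n : ℝ) + 1) := by
  rw [harmonic_succ]; push_cast; ring

lemma harm3 : ((harmonic 3 : ℚ) : ℝ) = 11/6 := by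
  norm_num [show (3:ℕ)=2+1 from rfl, show (2:ℕ)=1+1 from rfl, show (1:ℕ)=0+1 from rfl,
    harmonic_succ, harmonic_zero]

lemma harm5 : ((harmonic 5 : ℚ) : ℝ) = 137/60 := by
  norm_num [show (5:ℕ)=4+1 from rfl, show (4:ℕ)=3+1 from rfl, show (3:ℕ)=2+1 from rfl,
    show (2:ℕ)=1+1 from rfl, show (1:ℕ)=0+1 from rfl, harmonic_succ, harmonic_zero]

lemma harm6 : ((harmonic 6 : ℚ) : ℝ) = 49/20 := by
  norm_num [show (6:ℕ)=5+1 from rfl, show (5:ℕ)=4+1 from rfl, show (4:ℕ)=3+1 from rfl,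
    show (3:ℕ)=2+1 from rfl, show (2:ℕ)=1+1 from rfl, show (1:ℕ)=0+1 from rfl,
    harmonic_succ, harmonic_zero]

lemma eFun_rec (a b : ℝ) (m : ℕ) :
    ((m : ℝ) + 2) * ((m : ℝ) + 1) * (eFun a b (m + 2) - a * ((m : ℝ) + 2) - b) =
      2 * (((m : ℝ) + 1) * (m : ℝ)) * (eFun a b (m + 1) - a * ((m : ℝ) + 1) - b)
        - (m : ℝ) * ((m : ℝ) - 1) * (eFun a b m - a * (m : ℝ) - b)
        + 6 * eFun a b m := by
  have h2 : ((m : ℝ) + 2) ≠ 0 := by positivity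
  have h3 : ((m : ℝ) + 3) ≠ 0 := by positivity
  simp only [eFun]
  rw [show m + 2 + 1 = (m + 1 + 1) + 1 from rfl, harm_cast_succ (m+1+1), harm_cast_succ (m+1)]
  push_cast
  field_simp
  ring

lemma exact_part (a b : ℝ) (C : ℕ → ℝ)
    (h0 : ∀ n : ℕ, n ≤ 1 → C n = 0)
    (hrec : ∀ n : ℕ, 2 ≤ n →
      C n = a * (n : ℝ) + b + (6 / ((n : ℝ) * ((n : ℝ) - 1))) *
        ∑ k ∈ Finset.range (n - 1), ((n : ℝ) - (k : ℝ) - 1) * C k) :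
    ∀ n : ℕ, 4 ≤ n → C n = eFun a b n := by
  have hC0 : C 0 = 0 := h0 0 (by norm_num)
  have hC1 : C 1 = 0 := h0 1 (by norm_num)
  have hC2 : C 2 = 2*a + b := by
    have h := hrec 2 (by norm_num)
    norm_num [Finset.sum_range_succ, hC0, hC1] at h
    linarith
  have hC3 : C 3 = 3*a + b := by
    have h := hrec 3 (by norm_num)
    norm_num [Finset.sum_range_succ, hC0, hC1] at h
    linarith
  have hC4 : C 4 = 5*a + 3/2*b := by
    have h := hrec 4 (by norm_num)
    norm_num [Finset.sum_range_succ, hC0, hC1, hC2] at h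
    linarith
  have hC5 : C 5 = 71/10*a + 19/10*b := by
    have h := hrec 5 (by norm_num)
    norm_num [Finset.sum_range_succ, hC0, hC1, hC2, hC3] at h
    linarith
  set T : ℕ → ℝ := fun n => ∑ k ∈ Finset.range n, ((n : ℝ) - (k : ℝ) - 1) * C k with hT
  have hTeq : ∀ n : ℕ, (∑ k ∈ Finset.range (n - 1), ((n : ℝ) - (k : ℝ) - 1) * C k) = T n := by
    intro n
    rcases n with _ | m
    · simp [hT]
    · simp only [hT, Nat.add_sub_cancel, Finset.sum_range_succ]
      have hz : ((m : ℝ) + 1 - (m : ℝ) - 1) * C m = 0 := by ring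
      push_cast
      rw [hz, add_zero]
  have hTS : ∀ n : ℕ, 2 ≤ n → T n = (n : ℝ) * ((n : ℝ) - 1) / 6 * (C n - a * n - b) := by
    intro n hn
    have h := hrec n hn
    rw [hTeq n] at h
    have h2 : (2:ℝ) ≤ (n:ℝ) := by exact_mod_cast hn
    have hne : (n:ℝ) * ((n:ℝ) - 1) ≠ 0 :=
      mul_ne_zero (by linarith) (by linarith)
    have hmain : C n - a*n - b = 6/((n:ℝ)*((n:ℝ)-1)) * T n := by linarith
    rw [hmain]
    have hn1 : (n:ℝ) - 1 ≠ 0 := by linarith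
    field_simp
  have htel : ∀ n : ℕ, T (n + 1) - T n = ∑ k ∈ Finset.range n, C k := by
    intro n
    have h1 : T (n + 1) = ∑ k ∈ Finset.range n, (((n:ℝ)+1) - (k:ℝ) - 1) * C k := by
      simp only [hT, Finset.sum_range_succ]
      push_cast
      have hz : ((n : ℝ) + 1 - (n : ℝ) - 1) * C n = 0 := by ring
      rw [hz, add_zero]
    rw [h1, hT, ← Finset.sum_sub_distrib]
    exact Finset.sum_congr rfl fun k _ => by ring
  intro n
  induction n using Nat.strong_induction_on with
  | _ n ih =>
  intro hn
  rcases lt_or_ge n 6 with h6 | h6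
  · interval_cases n
    · rw [hC4]
      simp only [eFun]
      norm_num [harm5, harm3]
      ring
    · rw [hC5]
      simp only [eFun]
      norm_num [harm6, harm3]
      ring
  · obtain ⟨m, rfl⟩ : ∃ m, n = m + 2 := ⟨n - 2, by omega⟩
    have hm1 : C m = eFun a b m := ih m (by omega) (by omega)
    have hm2 : C (m + 1) = eFun a b (m + 1) := ih (m + 1) (by omega) (by omega)
    have t1 := hTS m (by omega)
    have t2 := hTS (m + 1) (by omega)
    have t3 := hTS (m + 2) (by omega)
    have e1 := htel (m + 1)
    have e2 := htel m
    rw [Finset.sum_range_succ] at e1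
    have tdiff : T (m + 2) - 2 * T (m + 1) + T m = C m := by linarith
    rw [t1, t2, t3] at tdiff
    push_cast at tdiff
    rw [hm1, hm2] at tdiff
    have ER := eFun_rec a b m
    have hne2 : ((m:ℝ) + 2) * ((m:ℝ) + 1) ≠ 0 := by positivity
    have hz : ((m:ℝ) + 2) * ((m:ℝ) + 1) * (C (m + 2) - eFun a b (m + 2)) = 0 := by
      linear_combination 6 * tdiff - ER
    rcases mul_eq_zero.mp hz with h | h
    · exact absurd h hne2
    · linarith


lemma one_le_log_three : (1:ℝ) ≤ Real.log 3 := by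
  rw [Real.le_log_iff_exp_le (by norm_num)]
  exact (Real.exp_one_lt_d9.le.trans (by norm_num))

lemma one_isBigO_log : (fun _ : ℕ => (1:ℝ)) =O[atTop] fun n : ℕ => Real.log n := by
  apply IsBigO.of_bound 1
  filter_upwards [eventually_ge_atTop 3] with n hn
  have h3 : (3:ℝ) ≤ (n:ℝ) := by exact_mod_cast hn
  have hl : (1:ℝ) ≤ Real.log n :=
    one_le_log_three.trans (Real.log_le_log (by norm_num) h3)
  simp only [Real.norm_eq_abs]
  rw [abs_of_nonneg (by linarith : (0:ℝ) ≤ Real.log n)]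
  simpa using hl

lemma const_isBigO_log (c : ℝ) : (fun _ : ℕ => c) =O[atTop] fun n : ℕ => Real.log n := by
  have := one_isBigO_log.const_mul_left c
  simpa using this

lemma log_succ_sub_log_le (x : ℝ) (hx : 1 ≤ x) :
    Real.log (x + 1) - Real.log x ≤ 1 / x := by
  have hx0 : (0:ℝ) < x := by linarith
  rw [← Real.log_div (by linarith) (by linarith)]
  have := Real.log_le_sub_one_of_pos (show (0:ℝ) < (x+1)/x by positivity)
  calc Real.log ((x+1)/x) ≤ (x+1)/x - 1 := this
    _ = 1/x := by field_simp; ring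

lemma Aterm_bigO :
    (fun n : ℕ => ((n:ℝ)+1) * (((harmonic (n+1) : ℚ) : ℝ)
        - Real.log ((n:ℝ)+1) - Real.eulerMascheroniConstant))
      =O[atTop] (fun _ : ℕ => (1:ℝ)) := by
  apply IsBigO.of_bound 1
  filter_upwards with n
  set m : ℕ := n + 1 with hm
  have hmr : ((m:ℝ)) = (n:ℝ) + 1 := by rw [hm]; push_cast; ring
  have hm0 : (0:ℝ) < (m:ℝ) := by rw [hmr]; positivity
  have hlow : Real.eulerMascheroniConstant < ((harmonic m : ℚ) : ℝ) - Real.log m := by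
    have h := Real.eulerMascheroniConstant_lt_eulerMascheroniSeq' m
    rwa [Real.eulerMascheroniSeq', if_neg (by simp [hm])] at h
  have hup : ((harmonic m : ℚ) : ℝ) - Real.log ((m:ℝ)+1) < Real.eulerMascheroniConstant := by
    have h := Real.eulerMascheroniSeq_lt_eulerMascheroniConstant m
    rwa [Real.eulerMascheroniSeq] at h
  have hgap : Real.log ((m:ℝ)+1) - Real.log m ≤ 1 / m :=
    log_succ_sub_log_le _ (by rw [hmr]; linarith [Nat.cast_nonneg (α := ℝ) n])
  set x : ℝ := ((harmonic m : ℚ) : ℝ) - Real.log m - Real.eulerMascheroniConstant with hx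
  have hx0 : 0 < x := by rw [hx]; linarith
  have hx1 : x ≤ 1 / m := by rw [hx]; linarith
  have : ((m:ℝ)) * x ≤ 1 := by
    calc (m:ℝ) * x ≤ (m:ℝ) * (1/m) := by
          exact mul_le_mul_of_nonneg_left hx1 (le_of_lt hm0)
      _ = 1 := by field_simp
  rw [← hmr]
  simp only [Real.norm_eq_abs]
  rw [abs_of_nonneg (by positivity : (0:ℝ) ≤ (m:ℝ) * x)]
  simpa using this

lemma Bterm_bigO :
    (fun n : ℕ => ((n:ℝ)+1) * Real.log ((n:ℝ)+1) - (n:ℝ) * Real.log n)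
      =O[atTop] (fun n : ℕ => Real.log n) := by
  apply IsBigO.of_bound 3
  filter_upwards [eventually_ge_atTop 3] with n hn
  set x : ℝ := (n:ℝ) with hxdef
  have hx3 : (3:ℝ) ≤ x := by rw [hxdef]; exact_mod_cast hn
  have hlog1 : (1:ℝ) ≤ Real.log x := one_le_log_three.trans (Real.log_le_log (by norm_num) hx3)
  have hmono : Real.log x ≤ Real.log (x+1) := Real.log_le_log (by linarith) (by linarith)
  have hgap : Real.log (x+1) - Real.log x ≤ 1/x := log_succ_sub_log_le x (by linarith)
  have h2 : Real.log (x+1) ≤ 2 * Real.log x := by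
    have : Real.log (x+1) ≤ Real.log (x^2) := Real.log_le_log (by linarith) (by nlinarith)
    rwa [Real.log_pow, show ((2:ℕ):ℝ) = 2 by norm_num] at this
  have hxinv : x * (1/x) = 1 := by field_simp
  have hE : (x+1) * Real.log (x+1) - x * Real.log x
      = x * (Real.log (x+1) - Real.log x) + Real.log (x+1) := by ring
  have hub : (x+1) * Real.log (x+1) - x * Real.log x ≤ 3 * Real.log x := by
    rw [hE]
    have hxgap : x * (Real.log (x+1) - Real.log x) ≤ 1 := by
      calc x * (Real.log (x+1) - Real.log x) ≤ x * (1/x) :=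
            mul_le_mul_of_nonneg_left hgap (by linarith)
        _ = 1 := hxinv
    linarith
  have hlb : 0 ≤ (x+1) * Real.log (x+1) - x * Real.log x := by
    have : x * Real.log x ≤ (x+1) * Real.log (x+1) := by nlinarith
    linarith
  simp only [Real.norm_eq_abs]
  rw [abs_of_nonneg hlb, abs_of_nonneg (by linarith : (0:ℝ) ≤ Real.log x)]
  exact hub

/-- Dual-pivot Quicksort recurrence with cutoff `M = 1` and linear toll `a·n + b`
(valid for all `n ≥ 2`): exact closed form for `n ≥ 4` (with a suitable constant `R`),
and the asymptotic expansion `C_n = (6/5)a·n ln n + (…)·n + O(log n)`. -/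
theorem dual_pivot_recurrence_solution (a b : ℝ) (C : ℕ → ℝ)
    (h0 : ∀ n : ℕ, n ≤ 1 → C n = 0)
    (hrec : ∀ n : ℕ, 2 ≤ n →
      C n = a * (n : ℝ) + b + (6 / ((n : ℝ) * ((n : ℝ) - 1))) *
        ∑ k ∈ Finset.range (n - 1), ((n : ℝ) - (k : ℝ) - 1) * C k) :
    (∃ R : ℝ, ∀ n : ℕ, 4 ≤ n →
      C n = (6 / 5) * a * ((n : ℝ) + 1) *
            (((harmonic (n + 1) : ℚ) : ℝ) - ((harmonic 3 : ℚ) : ℝ))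
          + (1 / 5) * ((n : ℝ) + 1) * ((19 / 5) * a + 2 * (b - a))
          + (a - b) / 2
          + ((Nat.choose 5 5 : ℝ) * R) / (n.choose 4 : ℝ)) ∧
    (fun n : ℕ => C n - ((6 / 5) * a * (n : ℝ) * Real.log n
        + ((19 / 25) * a + (6 / 5) * (a * Real.eulerMascheroniConstant
            + (b - a) / 3 - a * ((harmonic 3 : ℚ) : ℝ))) * (n : ℝ)))
      =O[atTop] (fun n : ℕ => Real.log n) := by
  have hexact := exact_part a b C h0 hrec
  constructor
  · refine ⟨0, fun n hn => ?_⟩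
    rw [hexact n hn]
    simp [eFun]
  · have hsplit : ∀ n : ℕ,
        eFun a b n - ((6 / 5) * a * (n : ℝ) * Real.log n
          + ((19 / 25) * a + (6 / 5) * (a * Real.eulerMascheroniConstant
              + (b - a) / 3 - a * ((harmonic 3 : ℚ) : ℝ))) * (n : ℝ))
        = (6/5) * a * (((n:ℝ)+1) * (((harmonic (n+1) : ℚ) : ℝ)
              - Real.log ((n:ℝ)+1) - Real.eulerMascheroniConstant))
          + (6/5) * a * (((n:ℝ)+1) * Real.log ((n:ℝ)+1) - (n:ℝ) * Real.log n)
          + ((6/5) * a * Real.eulerMascheroniConstant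
              - (6/5) * a * ((harmonic 3 : ℚ) : ℝ) + 19/25 * a + 2/5 * (b - a) + (a - b)/2) := by
      intro n
      simp only [eFun]
      ring
    have hO : (fun n : ℕ =>
        eFun a b n - ((6 / 5) * a * (n : ℝ) * Real.log n
          + ((19 / 25) * a + (6 / 5) * (a * Real.eulerMascheroniConstant
              + (b - a) / 3 - a * ((harmonic 3 : ℚ) : ℝ))) * (n : ℝ)))
        =O[atTop] (fun n : ℕ => Real.log n) := by
      have h1 := (Aterm_bigO.trans one_isBigO_log).const_mul_left ((6:ℝ)/5 * a)
      have h2 := Bterm_bigO.const_mul_left ((6:ℝ)/5 * a)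
      have h3 := const_isBigO_log ((6/5) * a * Real.eulerMascheroniConstant
              - (6/5) * a * ((harmonic 3 : ℚ) : ℝ) + 19/25 * a + 2/5 * (b - a) + (a - b)/2)
      exact ((h1.add h2).add h3).congr_left fun n => (hsplit n).symm
    refine Filter.EventuallyEq.trans_isBigO ?_ hO
    filter_upwards [eventually_ge_atTop 4] with n hn
    rw [hexact n hn]
end

section
/- Let (D_1, D_2, D_3) be uniform spacings on the 2-simplex (density 2). Then 2·E[(1 + (D_1+D_2)(D_2+2D_3) + (19/10)·Σ_{j=1}^3 D_j ln D_j)^2] = 2231/360 − (361/600)·π^2. -/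
open Real MeasureTheory Set Filter Topology intervalIntegral

namespace QSVar

lemma contV : Continuous (fun x : ℝ => (1 - x) * Real.log (1 - x)) := by
  exact Real.continuous_mul_log.comp (continuous_const.sub continuous_id)

lemma contOn_log_mul_log :
    ContinuousOn (fun x : ℝ => Real.log x * Real.log (1 - x)) (Icc 0 1) := by
  intro t ht
  rcases eq_or_lt_of_le ht.1 with h0 | h0
  · -- t = 0
    subst h0
    have hval : Real.log (0:ℝ) * Real.log (1 - 0) = 0 := by simp
    rw [ContinuousWithinAt, hval]
    apply squeeze_zero_norm'
      (a := fun x : ℝ => 2 * |x * Real.log x|)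
    · have h2 : ∀ᶠ x : ℝ in 𝓝[Icc 0 1] (0:ℝ), |x| < 1/2 := by
        apply Filter.Eventually.filter_mono nhdsWithin_le_nhds
        have : Tendsto (fun x : ℝ => |x|) (𝓝 0) (𝓝 |0|) := continuous_abs.tendsto 0
        simp only [abs_zero] at this
        exact this.eventually_lt_const (by norm_num)
      filter_upwards [h2, eventually_mem_nhdsWithin] with x hx hmem
      rcases eq_or_lt_of_le hmem.1 with rfl | hxpos
      · simp
      · have hx2 : x < 1/2 := lt_of_le_of_lt (le_abs_self x) hx
        have h1x : (0:ℝ) < 1 - x := by linarith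
        have hlog1x : -Real.log (1 - x) ≤ 2 * x := by
          have hlb := Real.one_sub_inv_le_log_of_pos h1x
          have h4 : (1:ℝ) ≤ (1+2*x)*(1-x) := by nlinarith
          have h5 : (1-x)⁻¹ ≤ 1+2*x := by
            rw [← one_div, div_le_iff₀ h1x]; linarith
          linarith
        have hlog1x' : Real.log (1 - x) ≤ 0 :=
          Real.log_nonpos (by linarith) (by linarith)
        have hlogx : Real.log x ≤ 0 := Real.log_nonpos hxpos.le (by linarith)
        simp only [Real.norm_eq_abs, abs_mul, abs_of_nonpos hlogx, abs_of_nonpos hlog1x',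
          abs_of_nonneg hxpos.le]
        nlinarith [neg_nonneg.mpr hlogx]
    · have h := (Real.continuous_mul_log.tendsto' 0 0 (by simp)).abs.const_mul 2
      simp only [abs_zero, mul_zero] at h
      exact h.mono_left nhdsWithin_le_nhds
  · rcases eq_or_lt_of_le ht.2 with h1 | h1
    · -- t = 1
      subst h1
      have hval : Real.log (1:ℝ) * Real.log (1 - 1) = 0 := by simp
      rw [ContinuousWithinAt, hval]
      apply squeeze_zero_norm'
        (a := fun x : ℝ => 2 * |(1 - x) * Real.log (1 - x)|)
      · have h2 : ∀ᶠ x : ℝ in 𝓝[Icc 0 1] (1:ℝ), |x - 1| < 1/2 := by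
          apply Filter.Eventually.filter_mono nhdsWithin_le_nhds
          have : Tendsto (fun x : ℝ => |x - 1|) (𝓝 1) (𝓝 |1 - 1|) :=
            (continuous_abs.comp (continuous_id.sub continuous_const)).tendsto 1
        
          simp only [sub_self, abs_zero] at this
          exact this.eventually_lt_const (by norm_num)
        filter_upwards [h2, eventually_mem_nhdsWithin] with x hx hmem
        rcases eq_or_lt_of_le hmem.2 with rfl | hxlt
        · simp
        · have hx2 : 1/2 < x := by
            have := abs_lt.1 hx; linarith [this.1]
          have hxpos : (0:ℝ) < x := by linarith
          have h1x : (0:ℝ) < 1 - x := by linarith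
          have hlogx : -Real.log x ≤ 2 * (1 - x) := by
            have hlb := Real.one_sub_inv_le_log_of_pos hxpos
            have h4 : (1:ℝ) ≤ (1+2*(1-x))*x := by nlinarith
            have h5 : x⁻¹ ≤ 1+2*(1-x) := by
              rw [← one_div, div_le_iff₀ hxpos]; linarith
            linarith
          have hlogx' : Real.log x ≤ 0 := Real.log_nonpos hxpos.le hmem.2
          have hlog1x : Real.log (1 - x) ≤ 0 :=
            Real.log_nonpos h1x.le (by linarith)
          simp only [Real.norm_eq_abs, abs_mul, abs_of_nonpos hlogx', abs_of_nonpos hlog1x,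
            abs_of_nonneg h1x.le]
          nlinarith [neg_nonneg.mpr hlog1x]
      · have h := (contV.tendsto' 1 0 (by simp)).abs.const_mul 2
        simp only [abs_zero, mul_zero] at h
        exact h.mono_left nhdsWithin_le_nhds
    · -- interior
      apply ContinuousAt.continuousWithinAt
      have hl : ContinuousAt Real.log t := Real.continuousAt_log (ne_of_gt h0)
      have hl2 : ContinuousAt (fun x : ℝ => Real.log (1 - x)) t := by
        have : (1:ℝ) - t ≠ 0 := by linarith
        exact (Real.continuousAt_log this).comp
          ((continuous_const.sub continuous_id).continuousAt)
      exact hl.mul hl2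

lemma integral_pow_mul_log (k : ℕ) :
    ∫ x in (0:ℝ)..1, x ^ (k+1) * Real.log x = -1 / ((k:ℝ)+2)^2 := by
  have hk : ((k:ℝ)+2) ≠ 0 := by positivity
  have hFTC := intervalIntegral.integral_eq_sub_of_hasDerivAt_of_le
    (f := fun x : ℝ => x ^ (k+2) * Real.log x / ((k:ℝ)+2) - x ^ (k+2) / ((k:ℝ)+2)^2)
    (f' := fun x : ℝ => x ^ (k+1) * Real.log x)
    (a := 0) (b := 1) zero_le_one ?cont ?deriv ?int
  case cont =>
    apply Continuous.continuousOn
    have h1 : Continuous fun x : ℝ => x ^ (k+1) * (x * Real.log x) :=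
      (continuous_pow _).mul Real.continuous_mul_log
    have h2 : Continuous fun x : ℝ => x ^ (k+2) * Real.log x := by
      apply h1.congr
      intro x; ring
    exact (h2.div_const _).sub ((continuous_pow _).div_const _)
  case deriv =>
    intro x hx
    have hx0 : x ≠ 0 := ne_of_gt hx.1
    have h1 : HasDerivAt (fun x : ℝ => x ^ (k+2) * Real.log x)
        (((k:ℝ)+2) * x ^ (k+1) * Real.log x + x ^ (k+1)) x := by
      have := (hasDerivAt_pow (k+2) x).mul (Real.hasDerivAt_log hx0)
      refine this.congr_deriv ?_
      simp only [show k + 2 - 1 = k + 1 by omega, Nat.cast_add, Nat.cast_ofNat]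
      field_simp
      ring
    have := (h1.div_const ((k:ℝ)+2)).sub ((hasDerivAt_pow (k+2) x).div_const (((k:ℝ)+2)^2))
    refine this.congr_deriv ?_
    simp only [show k + 2 - 1 = k + 1 by omega, Nat.cast_add, Nat.cast_ofNat]
    field_simp
    ring
  case int =>
    apply Continuous.intervalIntegrable
    have h1 : Continuous fun x : ℝ => x ^ k * (x * Real.log x) :=
      (continuous_pow _).mul Real.continuous_mul_log
    apply h1.congr
    intro x; ring
  rw [hFTC]
  norm_num
  ring_nf

lemma telescope_sum (c : ℕ) :
    HasSum (fun m : ℕ => 1/((m:ℝ)+1) - 1/((m:ℝ)+1+c))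
      (∑ k ∈ Finset.range c, 1/((k:ℝ)+1)) := by
  set φ : ℕ → ℝ := fun m => ∑ j ∈ Finset.range c, 1/((m:ℝ)+1+j) with hφ
  have hkey : ∀ m : ℕ, 1/((m:ℝ)+1) - 1/((m:ℝ)+1+c) = φ m - φ (m+1) := by
    intro m
    have h2 := Finset.sum_range_sub' (f := fun j : ℕ => 1/((m:ℝ)+1+j)) c
    have h3 : φ m - φ (m+1) = ∑ j ∈ Finset.range c,
        (1/((m:ℝ)+1+j) - 1/((m:ℝ)+1+(j+1:ℕ))) := by
      rw [Finset.sum_sub_distrib]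
      congr 1
      apply Finset.sum_congr rfl
      intro j _
      push_cast
      ring
    rw [h3, h2]
    norm_num
  have hnonneg : ∀ m : ℕ, 0 ≤ 1/((m:ℝ)+1) - 1/((m:ℝ)+1+c) := by
    intro m
    have h1 : (0:ℝ) < (m:ℝ)+1 := by positivity
    have h2 : ((m:ℝ)+1) ≤ (m:ℝ)+1+c := by
      have : (0:ℝ) ≤ (c:ℝ) := Nat.cast_nonneg c
      linarith
    have := one_div_le_one_div_of_le h1 h2
    linarith
  rw [hasSum_iff_tendsto_nat_of_nonneg hnonneg]
  have hps : ∀ N : ℕ, ∑ m ∈ Finset.range N, (1/((m:ℝ)+1) - 1/((m:ℝ)+1+c))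
      = φ 0 - φ N := by
    intro N
    calc ∑ m ∈ Finset.range N, (1/((m:ℝ)+1) - 1/((m:ℝ)+1+c))
        = ∑ m ∈ Finset.range N, (φ m - φ (m+1)) := by
          apply Finset.sum_congr rfl; intro m _; exact hkey m
      _ = φ 0 - φ N := Finset.sum_range_sub' φ N
  rw [tendsto_congr hps]
  have hφ0 : Tendsto φ atTop (𝓝 0) := by
    have : (0:ℝ) = ∑ j ∈ Finset.range c, (0:ℝ) := by simp
    rw [this]
    apply tendsto_finset_sum
    intro j _
    have h1 : Tendsto (fun N : ℕ => (N:ℝ) + (1+(j:ℝ))) atTop atTop :=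
      tendsto_atTop_add_const_right _ _ tendsto_natCast_atTop_atTop
    have h2 : Tendsto (fun N : ℕ => (N:ℝ) + 1 + (j:ℝ)) atTop atTop :=
      h1.congr (fun N => by ring)
    have h3 := h2.inv_tendsto_atTop
    apply h3.congr
    intro N
    simp [one_div]
  have : Tendsto (fun N : ℕ => φ 0 - φ N) atTop (𝓝 (φ 0)) := by
    have h := (tendsto_const_nhds (x := φ 0) (f := (atTop : Filter ℕ))).sub hφ0
    simpa using h
  convert this using 2
  rw [hφ]
  apply Finset.sum_congr rfl
  intro j _
  push_cast
  ring

lemma summable_aux (n : ℕ) :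
    Summable (fun m : ℕ => 1/(((m:ℝ)+1)*((m:ℝ)+(n:ℝ)+3)^2)) := by
  have hs : Summable (fun m : ℕ => 1/((m:ℝ)+1)^3) := by
    have h := (Real.summable_one_div_nat_pow (p := 3)).2 (by norm_num)
    have h2 := (summable_nat_add_iff 1).2 h
    apply h2.congr
    intro m
    push_cast
    ring
  apply Summable.of_nonneg_of_le (fun m => by positivity) ?_ hs
  intro m
  have h1 : (0:ℝ) < (m:ℝ)+1 := by positivity
  have h2 : ((m:ℝ)+1)^3 ≤ ((m:ℝ)+1)*((m:ℝ)+(n:ℝ)+3)^2 := by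
    have hc : ((m:ℝ)+1) ≤ (m:ℝ)+(n:ℝ)+3 := by
      have : (0:ℝ) ≤ (n:ℝ) := Nat.cast_nonneg n
      linarith
    nlinarith [sq_nonneg ((m:ℝ)+1), h1.le, sq_nonneg ((m:ℝ)+(n:ℝ)+3), mul_le_mul_of_nonneg_left (mul_le_mul hc hc (by linarith) (by linarith)) h1.le]
  exact one_div_le_one_div_of_le (by positivity) h2

lemma Mlem (n : ℕ) :
    ∫ x in (0:ℝ)..1, x^(n+1) * (Real.log x * Real.log (1-x)) =
      (∑ k ∈ Finset.range (n+2), 1/((k:ℝ)+1))/((n:ℝ)+2)^2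
      + (∑ k ∈ Finset.range (n+2), 1/((k:ℝ)+1)^2)/((n:ℝ)+2)
      - Real.pi^2/(6*((n:ℝ)+2)) := by
  set g : ℕ → ℝ → ℝ := fun m x => x^(n+1) * (-Real.log x) * (x^(m+1)/((m:ℝ)+1)) with hg_def
  have hgcont : ∀ m : ℕ, Continuous (g m) := by
    intro m
    have h1 : Continuous (fun x : ℝ => (x^n * x^m / ((m:ℝ)+1)) * -((x * Real.log x) * x)) := by
      apply Continuous.mul
      · fun_prop
      · exact ((Real.continuous_mul_log.mul continuous_id)).neg
    apply h1.congr
    intro x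
    rw [hg_def]
    ring
  have hval : ∀ m : ℕ, ∫ x in Ioc (0:ℝ) 1, g m x
      = 1/(((m:ℝ)+1)*((m:ℝ)+(n:ℝ)+3)^2) := by
    intro m
    rw [← intervalIntegral.integral_of_le zero_le_one]
    have e : ∀ x : ℝ, g m x = (-1/((m:ℝ)+1)) * (x^((n+m+1)+1) * Real.log x) := by
      intro x
      rw [hg_def]
      simp only
      rw [show (n+m+1)+1 = (n+1)+(m+1) by omega, pow_add]
      ring
    calc ∫ x in (0:ℝ)..1, g m x
        = ∫ x in (0:ℝ)..1, (-1/((m:ℝ)+1)) * (x^((n+m+1)+1) * Real.log x) := by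
          apply intervalIntegral.integral_congr
          intro x _
          exact e x
      _ = (-1/((m:ℝ)+1)) * ∫ x in (0:ℝ)..1, x^((n+m+1)+1) * Real.log x := by
          rw [intervalIntegral.integral_const_mul]
      _ = 1/(((m:ℝ)+1)*((m:ℝ)+(n:ℝ)+3)^2) := by
          rw [integral_pow_mul_log (n+m+1)]
          have h1 : ((m:ℝ)+1) ≠ 0 := by positivity
          have h2 : ((n:ℝ)+(m:ℝ)+1+2) ≠ 0 := by positivity
          push_cast
          rw [div_mul_div_comm]
          rw [div_eq_div_iff (by positivity) (by positivity)]
          ring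
  have hnn : ∀ m : ℕ, ∀ x ∈ Ioc (0:ℝ) 1, 0 ≤ g m x := by
    intro m x hx
    rw [hg_def]
    simp only
    have h1 : (0:ℝ) ≤ -Real.log x := by
      have := Real.log_nonpos hx.1.le hx.2
      linarith
    have h2 : (0:ℝ) ≤ x := hx.1.le
    positivity
  rw [intervalIntegral.integral_of_le zero_le_one]
  have hsum_eq : ∀ x ∈ Ioc (0:ℝ) 1,
      x^(n+1) * (Real.log x * Real.log (1-x)) = ∑' m : ℕ, g m x := by
    intro x hx
    rcases eq_or_lt_of_le hx.2 with h1 | h1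
    · subst h1
      rw [hg_def]
      simp
    · have habs : |x| < 1 := abs_lt.2 ⟨by linarith [hx.1], h1⟩
      have hs := (Real.hasSum_pow_div_log_of_abs_lt_one habs).mul_left
        (x^(n+1) * (-Real.log x))
      have hs2 : HasSum (fun m : ℕ => g m x)
          (x^(n+1) * (Real.log x * Real.log (1-x))) := by
        simp only [hg_def]
        rw [show x^(n+1) * (Real.log x * Real.log (1-x)) = x^(n+1) * -Real.log x * -Real.log (1-x) by ring]
        exact hs
      exact hs2.tsum_eq.symm
  rw [MeasureTheory.setIntegral_congr_fun measurableSet_Ioc hsum_eq]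
  rw [MeasureTheory.integral_tsum (fun m => (hgcont m).aestronglyMeasurable) ?_]
  · have hIoc : (fun m : ℕ => ∫ x in Ioc (0:ℝ) 1, g m x)
        = fun m : ℕ => 1/(((m:ℝ)+1)*((m:ℝ)+(n:ℝ)+3)^2) := funext hval
    rw [hIoc]
    have hT1' : HasSum (fun m : ℕ => 1/((m:ℝ)+1) - 1/((m:ℝ)+1+((n:ℝ)+2)))
        (∑ k ∈ Finset.range (n+2), 1/((k:ℝ)+1)) := by
      have hfun : (fun m : ℕ => 1/((m:ℝ)+1) - 1/((m:ℝ)+1+((n+2:ℕ):ℝ)))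
          = fun m : ℕ => 1/((m:ℝ)+1) - 1/((m:ℝ)+1+((n:ℝ)+2)) := by
        funext m
        push_cast
        ring_nf
      rw [← hfun]
      exact telescope_sum (n+2)
    have hT2 : HasSum (fun m : ℕ => 1/(((m:ℝ)+1+((n:ℝ)+2))^2))
        (Real.pi^2/6 - ∑ k ∈ Finset.range (n+2), 1/((k:ℝ)+1)^2) := by
      have hz2 : HasSum (fun i : ℕ => 1/(i:ℝ)^2)
          ((Real.pi^2/6 - ∑ k ∈ Finset.range (n+2), 1/((k:ℝ)+1)^2)
            + ∑ i ∈ Finset.range (n+3), 1/(i:ℝ)^2) := by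
        convert hasSum_zeta_two using 1
        rw [Finset.sum_range_succ' (fun i : ℕ => 1/(i:ℝ)^2) (n+2)]
        push_cast
        norm_num
      have h3 := (hasSum_nat_add_iff (f := fun i : ℕ => 1/(i:ℝ)^2) (n+3)).2 hz2
      have hfun : (fun m : ℕ => 1/(((m+(n+3):ℕ)):ℝ)^2)
          = fun m : ℕ => 1/(((m:ℝ)+1+((n:ℝ)+2))^2) := by
        funext m
        push_cast
        ring_nf
      rw [← hfun]
      exact h3
    have hpf : (fun m : ℕ => 1/(((m:ℝ)+1)*((m:ℝ)+(n:ℝ)+3)^2))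
        = fun m : ℕ => 1/((n:ℝ)+2)^2 * (1/((m:ℝ)+1) - 1/((m:ℝ)+1+((n:ℝ)+2)))
          - 1/((n:ℝ)+2) * (1/(((m:ℝ)+1+((n:ℝ)+2))^2)) := by
      funext m
      have h1 : ((m:ℝ)+1) ≠ 0 := by positivity
      have h2 : ((m:ℝ)+1+((n:ℝ)+2)) ≠ 0 := by positivity
      have h3 : ((n:ℝ)+2) ≠ 0 := by positivity
      have h4 : ((m:ℝ)+(n:ℝ)+3) = ((m:ℝ)+1+((n:ℝ)+2)) := by ring
      rw [h4]
      field_simp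
      ring
    rw [hpf]
    have hS := (hT1'.mul_left (1/((n:ℝ)+2)^2)).sub (hT2.mul_left (1/((n:ℝ)+2)))
    rw [hS.tsum_eq]
    have h3 : ((n:ℝ)+2) ≠ 0 := by positivity
    field_simp
    ring
  · have hlin : ∀ m : ℕ, ∫⁻ x in Ioc (0:ℝ) 1, ‖g m x‖ₑ
        = ENNReal.ofReal (1/(((m:ℝ)+1)*((m:ℝ)+(n:ℝ)+3)^2)) := by
      intro m
      have hint : IntegrableOn (g m) (Ioc (0:ℝ) 1) :=
        ((hgcont m).integrableOn_Icc).mono_set Ioc_subset_Icc_self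
      have hae : 0 ≤ᵐ[volume.restrict (Ioc (0:ℝ) 1)] g m :=
        (ae_restrict_mem measurableSet_Ioc).mono (fun x hx => hnn m x hx)
      have e1 : ∫⁻ x in Ioc (0:ℝ) 1, ‖g m x‖ₑ
          = ∫⁻ x in Ioc (0:ℝ) 1, ENNReal.ofReal (g m x) := by
        apply lintegral_congr_ae
        filter_upwards [ae_restrict_mem measurableSet_Ioc] with x hx
        rw [Real.enorm_eq_ofReal (hnn m x hx)]
      rw [e1, ← MeasureTheory.ofReal_integral_eq_lintegral_ofReal hint hae, hval m]
    simp_rw [hlin]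
    rw [← ENNReal.ofReal_tsum_of_nonneg (fun m => by positivity) (summable_aux n)]
    exact ENNReal.ofReal_ne_top

lemma M1 : ∫ x in (0:ℝ)..1, x * (Real.log x * Real.log (1-x)) = 1 - Real.pi^2/12 := by
  have h := Mlem 0
  rw [intervalIntegral.integral_congr (g := fun x : ℝ => x * (Real.log x * Real.log (1-x)))
    (fun x _ => by norm_num)] at h
  rw [h]
  rw [Finset.sum_range_succ, Finset.sum_range_succ, Finset.sum_range_zero,
      Finset.sum_range_succ, Finset.sum_range_succ, Finset.sum_range_zero]
  norm_num

lemma M2 : ∫ x in (0:ℝ)..1, x^2 * (Real.log x * Real.log (1-x)) = 71/108 - Real.pi^2/18 := by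
  have h := Mlem 1
  rw [intervalIntegral.integral_congr (g := fun x : ℝ => x^2 * (Real.log x * Real.log (1-x)))
    (fun x _ => by norm_num)] at h
  rw [h]
  rw [Finset.sum_range_succ, Finset.sum_range_succ, Finset.sum_range_succ,
      Finset.sum_range_zero, Finset.sum_range_succ, Finset.sum_range_succ,
      Finset.sum_range_succ, Finset.sum_range_zero]
  norm_num

lemma M3 : ∫ x in (0:ℝ)..1, x^3 * (Real.log x * Real.log (1-x)) = 35/72 - Real.pi^2/24 := by
  have h := Mlem 2
  rw [intervalIntegral.integral_congr (g := fun x : ℝ => x^3 * (Real.log x * Real.log (1-x)))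
    (fun x _ => by norm_num)] at h
  rw [h]
  rw [Finset.sum_range_succ, Finset.sum_range_succ, Finset.sum_range_succ,
      Finset.sum_range_succ, Finset.sum_range_zero, Finset.sum_range_succ,
      Finset.sum_range_succ, Finset.sum_range_succ, Finset.sum_range_succ,
      Finset.sum_range_zero]
  norm_num

lemma cont_poly_log : Continuous (fun t : ℝ => t*(1-t)*Real.log t) := by
  have h : Continuous (fun t : ℝ => (1-t)*(t*Real.log t)) :=
    (continuous_const.sub continuous_id).mul Real.continuous_mul_log
  apply h.congr
  intro t
  ring

lemma cont_poly_log1 : Continuous (fun t : ℝ => t*(1-t)*Real.log (1-t)) := by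
  have h : Continuous (fun t : ℝ => t*((1-t)*Real.log (1-t))) :=
    continuous_id.mul contV
  apply h.congr
  intro t
  ring

lemma t16 : ∫ t in (0:ℝ)..1, t*(1-t) = 1/6 := by
  rw [intervalIntegral.integral_congr (g := fun t : ℝ => t - t^2) (fun t _ => by ring)]
  rw [intervalIntegral.integral_sub
    ((by fun_prop : Continuous (fun t : ℝ => t)).intervalIntegrable 0 1)
    ((by fun_prop : Continuous (fun t : ℝ => t^2)).intervalIntegrable 0 1)]
  rw [integral_id, integral_pow]
  norm_num

lemma tlt : ∫ t in (0:ℝ)..1, t*(1-t)*Real.log t = -5/36 := by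
  have hFTC := intervalIntegral.integral_eq_sub_of_hasDerivAt_of_le
    (f := fun t : ℝ => (t^2/2 - t^3/3)*Real.log t - t^2/4 + t^3/9)
    (f' := fun t : ℝ => t*(1-t)*Real.log t)
    (a := 0) (b := 1) zero_le_one ?cont ?deriv ?int
  case cont =>
    apply Continuous.continuousOn
    have h1 : Continuous (fun t : ℝ => (t/2 - t^2/3)*(t*Real.log t) - t^2/4 + t^3/9) := by
      apply Continuous.add
      apply Continuous.sub
      · exact (by fun_prop : Continuous (fun t : ℝ => t/2 - t^2/3)).mul Real.continuous_mul_log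
      · fun_prop
      · fun_prop
    apply h1.congr
    intro t
    ring
  case deriv =>
    intro t ht
    have ht0 : t ≠ 0 := ne_of_gt ht.1
    have hp : HasDerivAt (fun t : ℝ => t^2/2 - t^3/3) (t - t^2) t := by
      have := ((hasDerivAt_pow 2 t).div_const 2).sub ((hasDerivAt_pow 3 t).div_const 3)
      refine this.congr_deriv ?_
      simp only [Nat.cast_ofNat, Nat.cast_one, Pi.pow_apply]
      push_cast
      ring
    have h := ((hp.mul (Real.hasDerivAt_log ht0)).sub
      ((hasDerivAt_pow 2 t).div_const 4)).add ((hasDerivAt_pow 3 t).div_const 9)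
    refine h.congr_deriv ?_
    simp only [Nat.cast_ofNat, Nat.cast_one, Pi.pow_apply]
    field_simp
    ring
  case int =>
    exact cont_poly_log.intervalIntegrable _ _
  rw [hFTC]
  norm_num

lemma tl1t : ∫ t in (0:ℝ)..1, t*(1-t)*Real.log (1-t) = -5/36 := by
  have h := intervalIntegral.integral_comp_sub_left (a := (0:ℝ)) (b := 1)
    (fun t : ℝ => t*(1-t)*Real.log t) 1
  norm_num at h
  rw [← tlt, ← h]
  apply intervalIntegral.integral_congr
  intro t _
  dsimp only
  ring

lemma K1 : ∫ t in (0:ℝ)..1, t*(1-t)*(Real.log t * Real.log (1-t))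
    = 37/108 - Real.pi^2/36 := by
  have hB := contOn_log_mul_log
  have hi1 : IntervalIntegrable (fun t : ℝ => t * (Real.log t * Real.log (1-t))) volume 0 1 := by
    apply ContinuousOn.intervalIntegrable
    rw [uIcc_of_le zero_le_one]
    exact continuous_id.continuousOn.mul hB
  have hi2 : IntervalIntegrable (fun t : ℝ => t^2 * (Real.log t * Real.log (1-t))) volume 0 1 := by
    apply ContinuousOn.intervalIntegrable
    rw [uIcc_of_le zero_le_one]
    exact (continuous_pow 2).continuousOn.mul hB
  rw [intervalIntegral.integral_congr
    (g := fun t : ℝ => t * (Real.log t * Real.log (1-t)) - t^2 * (Real.log t * Real.log (1-t)))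
    (fun t _ => by ring)]
  rw [intervalIntegral.integral_sub hi1 hi2, M1, M2]
  ring

lemma cross_eval (x : ℝ) (hx0 : 0 < x) (hx1 : x < 1) :
    ∫ y in (0:ℝ)..(1-x), (y * Real.log y) * ((1-x-y) * Real.log (1-x-y))
      = (1-x)^3 * ((37/108 - Real.pi^2/36) + (Real.log (1-x))^2/6
          - (5/18)*Real.log (1-x)) := by
  have hs : (0:ℝ) < 1 - x := by linarith
  have hcomp := intervalIntegral.integral_comp_mul_right
    (f := fun u : ℝ => (u * Real.log u) * ((1-x-u) * Real.log (1-x-u)))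
    (a := 0) (b := 1) hs.ne'
  rw [zero_mul, one_mul] at hcomp
  have h2 : ∫ y in (0:ℝ)..(1-x), (y * Real.log y) * ((1-x-y) * Real.log (1-x-y))
      = (1-x) * ∫ t in (0:ℝ)..1, ((t*(1-x)) * Real.log (t*(1-x)))
          * ((1-x-t*(1-x)) * Real.log (1-x-t*(1-x))) := by
    rw [hcomp, smul_eq_mul, ← mul_assoc, mul_inv_cancel₀ hs.ne', one_mul]
  rw [h2]
  have h3 : ∀ t ∈ uIcc (0:ℝ) 1,
      ((t*(1-x)) * Real.log (t*(1-x))) * ((1-x-t*(1-x)) * Real.log (1-x-t*(1-x)))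
      = (1-x)^2 * ((t*(1-t))*(Real.log (1-x))^2
          + (t*(1-t)*Real.log t)*Real.log (1-x)
          + (t*(1-t)*Real.log (1-t))*Real.log (1-x)
          + t*(1-t)*(Real.log t * Real.log (1-t))) := by
    intro t ht
    rw [uIcc_of_le zero_le_one] at ht
    rcases eq_or_lt_of_le ht.1 with h0 | h0
    · rw [← h0]; norm_num
    · rcases eq_or_lt_of_le ht.2 with h1 | h1
      · rw [h1]; norm_num
      · have e1 : Real.log (t*(1-x)) = Real.log t + Real.log (1-x) :=
          Real.log_mul (ne_of_gt h0) hs.ne'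
        have e2 : (1:ℝ)-x-t*(1-x) = (1-t)*(1-x) := by ring
        have e3 : Real.log ((1-t)*(1-x)) = Real.log (1-t) + Real.log (1-x) :=
          Real.log_mul (by linarith) hs.ne'
        rw [e1, e2, e3]
        ring
  rw [intervalIntegral.integral_congr h3]
  rw [intervalIntegral.integral_const_mul]
  have hiA : IntervalIntegrable (fun t : ℝ => (t*(1-t))*(Real.log (1-x))^2) volume 0 1 :=
    ((continuous_id.mul (continuous_const.sub continuous_id)).mul continuous_const).intervalIntegrable 0 1
  have hiB : IntervalIntegrable (fun t : ℝ => (t*(1-t)*Real.log t)*Real.log (1-x)) volume 0 1 :=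
    (cont_poly_log.mul continuous_const).intervalIntegrable _ _
  have hiC : IntervalIntegrable (fun t : ℝ => (t*(1-t)*Real.log (1-t))*Real.log (1-x)) volume 0 1 :=
    (cont_poly_log1.mul continuous_const).intervalIntegrable _ _
  have hiD : IntervalIntegrable (fun t : ℝ => t*(1-t)*(Real.log t * Real.log (1-t))) volume 0 1 := by
    apply ContinuousOn.intervalIntegrable
    rw [uIcc_of_le zero_le_one]
    exact ((by fun_prop : Continuous (fun t : ℝ => t*(1-t))).continuousOn).mul contOn_log_mul_log
  rw [intervalIntegral.integral_add ((hiA.add hiB).add hiC) hiD,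
      intervalIntegral.integral_add (hiA.add hiB) hiC,
      intervalIntegral.integral_add hiA hiB,
      intervalIntegral.integral_mul_const, intervalIntegral.integral_mul_const,
      intervalIntegral.integral_mul_const, t16, tlt, tl1t, K1]
  ring


set_option maxHeartbeats 4000000 in
lemma inner_eval (x : ℝ) (hx0 : 0 < x) (hx1 : x < 1) :
    (∫ y in (0:ℝ)..(1 - x), 2 * (1 + (x + y) * (y + 2 * (1 - x - y)) + (19 / 10) * (x * Real.log x + y * Real.log y + (1 - x - y) * Real.log (1 - x - y))) ^ 2)
      = (2) * (1 - x) + (-17/10) * (1 - x) ^ 2 + (1019/180) * (1 - x) ^ 3 + (-21/20) * (1 - x) ^ 4 + (2/5) * (1 - x) ^ 5 + (8) * x * (1 - x) + (1/10) * x * (1 - x) ^ 2 + (-404/45) * x * (1 - x) ^ 3 + (3) * x * (1 - x) ^ 4 + (-81/5) * x ^ 2 * (1 - x) ^ 2 + (26/3) * x ^ 2 * (1 - x) ^ 3 + (-16) * x ^ 3 * (1 - x) + (12) * x ^ 3 * (1 - x) ^ 2 + (8) * x ^ 4 * (1 - x) + (57/5) * (1 - x) ^ 2 * Real.log (1 -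 x) + (-323/150) * (1 - x) ^ 3 * Real.log (1 - x) + (-19/5) * (1 - x) ^ 4 * Real.log (1 - x) + (19/5) * x * (1 - x) ^ 2 * Real.log (1 - x) + (-76/15) * x * (1 - x) ^ 3 * Real.log (1 - x) + (-38/5) * x ^ 2 * (1 - x) ^ 2 * Real.log (1 - x) + (361/50) * (1 - x) ^ 3 * Real.log (1 - x) ^ 2 + (38/5) * x * (1 - x) * Real.log x + (19/50) * x * (1 - x) ^ 2 * Real.log x + (-38/15) * x * (1 - x) ^ 3 * Real.log x + (76/5) * x ^ 2 * (1 - x) * Real.log x + (-57/5) * x ^ 2 * (1 - x) ^ 2 * Real.log x + (-76/5) * x ^ 3 * (1 - x) * Real.log x + (361/50) * x ^ 2 * (1 - x) * Real.log x ^ 2 + (-361/900) * Real.pi ^ 2 * (1 - x) ^ 3 + (361/25) * (x ^ 1 * (Real.log x * Real.log (1 - x))) + (-722/25) * (x ^ 2 * (Real.log x * Real.log (1 - x))) + (361/25) * (x ^ 3 * (Real.log x * Real.log (1 - x))) := by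
  have hs : (0:ℝ) < 1 - x := by linarith
  have hw : Continuous (fun y : ℝ => y * Real.log y) := Real.continuous_mul_log
  have hv : Continuous (fun y : ℝ => (1 - x - y) * Real.log (1 - x - y)) :=
    Real.continuous_mul_log.comp (continuous_const.sub continuous_id)
  have hzc : Continuous (fun y : ℝ => 1 - x - y) := continuous_const.sub continuous_id
  have hcontf : Continuous (fun y : ℝ => 2 * (1 + (x + y) * (y + 2 * (1 - x - y)) + (19 / 10) * (x * Real.log x + y * Real.log y + (1 - x - y) * Real.log (1 - x - y))) ^ 2) := by
    have hP : Continuous (fun y : ℝ => (x + y) * (y + 2 * (1 - x - y))) := by fun_prop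
    have hL : Continuous (fun y : ℝ => x * Real.log x + y * Real.log y
        + (1 - x - y) * Real.log (1 - x - y)) := (continuous_const.add hw).add hv
    exact continuous_const.mul (((continuous_const.add hP).add (continuous_const.mul hL)).pow 2)
  have hcontcross : Continuous (fun y : ℝ => (y * Real.log y) * ((1 - x - y) * Real.log (1 - x - y))) := hw.mul hv
  have hint1 : IntervalIntegrable (fun y : ℝ => 2 * (1 + (x + y) * (y + 2 * (1 - x - y)) + (19 / 10) * (x * Real.log x + y * Real.log y + (1 - x - y) * Real.log (1 - x - y))) ^ 2 - (361/25) * ((y * Real.log y) * ((1 - x - y) * Real.log (1 - x - y)))) volume 0 (1 - x) :=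
    (hcontf.sub (continuous_const.mul hcontcross)).intervalIntegrable _ _
  have hint2 : IntervalIntegrable (fun y : ℝ => (361/25) * ((y * Real.log y) * ((1 - x - y) * Real.log (1 - x - y)))) volume 0 (1 - x) :=
    (continuous_const.mul hcontcross).intervalIntegrable _ _
  have hFTC := intervalIntegral.integral_eq_sub_of_hasDerivAt_of_le
    (f := fun y : ℝ => (2) * y ^ 1 + (21/10) * y ^ 2 + (19/5) * (y ^ 2 * Real.log y) + (121/675) * y ^ 3 + (779/225) * (y ^ 3 * Real.log y) + (361/150) * (y ^ 3 * Real.log y ^ 2) + (-61/40) * y ^ 4 + (-19/10) * (y ^ 4 * Real.log y) + (2/5) * y ^ 5 + (8) * x * y ^ 1 + (-9/5) * x * y ^ 2 + (38/5) * x * (y ^ 2 * Real.log y) + (-122/15) * x * y ^ 3 + (-38/5) * x * (y ^ 3 * Real.log y) + (3) * x * y ^ 4 + (38/5) * x * Real.log x * y ^ 1 + (399/100) * x * Real.log x * y ^ 2 + (361/50) * x * Real.log x * (y ^ 2 * Real.log y) + (-38/15) * x * Real.log x * y ^ 3 + (-81/5) * x ^ 2 * y ^ 2 + (-38/5) * x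 ^ 2 * (y ^ 2 * Real.log y) + (26/3) * x ^ 2 * y ^ 3 + (76/5) * x ^ 2 * Real.log x * y ^ 1 + (-57/5) * x ^ 2 * Real.log x * y ^ 2 + (361/50) * x ^ 2 * Real.log x ^ 2 * y ^ 1 + (-16) * x ^ 3 * y ^ 1 + (12) * x ^ 3 * y ^ 2 + (-76/5) * x ^ 3 * Real.log x * y ^ 1 + (8) * x ^ 4 * y ^ 1 + (19/5) * (1 - x - y) ^ 2 + (-38/5) * ((1 - x - y) ^ 2 * Real.log (1 - x - y)) + (-361/675) * (1 - x - y) ^ 3 + (361/225) * ((1 - x - y) ^ 3 * Real.log (1 - x - y)) + (-361/150) * ((1 - x - y) ^ 3 * Real.log (1 - x - y) ^ 2) + (-19/40) * (1 - x - y) ^ 4 + (19/10) * ((1 - x - y) ^ 4 * Real.log (1 - x - y)) + (-19/10) * x * (1 - x - y) ^ 2 + (19/5) * x * ((1 - x - y) ^ 2 * Real.log (1 - x - y)) + (38/45) * x * (1 - x - y) ^ 3 + (-38/15) * x * ((1 - x - y) ^ 3 * Real.log (1 - x - y)) + (361/100) * x * Real.log x * (1 - x - y) ^ 2 + (-361/50)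 * x * Real.log x * ((1 - x - y) ^ 2 * Real.log (1 - x - y)))
    (f' := fun y : ℝ => 2 * (1 + (x + y) * (y + 2 * (1 - x - y)) + (19 / 10) * (x * Real.log x + y * Real.log y + (1 - x - y) * Real.log (1 - x - y))) ^ 2 - (361/25) * ((y * Real.log y) * ((1 - x - y) * Real.log (1 - x - y))))
    (a := 0) (b := 1 - x) hs.le ?cont ?deriv hint1
  case cont =>
    apply Continuous.continuousOn
    have hat : Continuous (fun y : ℝ => (2) * y ^ 1 + (21/10) * y ^ 2 + (19/5) * (y ^ 1 * (y * Real.log y)) + (121/675) * y ^ 3 + (779/225) * (y ^ 2 * (y * Real.log y)) + (361/150) * (y ^ 1 * (y * Real.log y) ^ 2) + (-61/40) * y ^ 4 + (-19/10) * (y ^ 3 * (y * Real.log y)) + (2/5) * y ^ 5 + (8) * x * y ^ 1 + (-9/5) * x * y ^ 2 + (38/5) * x * (y ^ 1 * (y * Real.log y)) + (-122/15) * x * y ^ 3 + (-38/5) * x * (y ^ 2 * (y * Real.log y)) + (3) * x * y ^ 4 + (38/5) * x * Real.log x * y ^ 1 + (399/100) * x * Real.log x * y ^ 2 + (361/50)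 * x * Real.log x * (y ^ 1 * (y * Real.log y)) + (-38/15) * x * Real.log x * y ^ 3 + (-81/5) * x ^ 2 * y ^ 2 + (-38/5) * x ^ 2 * (y ^ 1 * (y * Real.log y)) + (26/3) * x ^ 2 * y ^ 3 + (76/5) * x ^ 2 * Real.log x * y ^ 1 + (-57/5) * x ^ 2 * Real.log x * y ^ 2 + (361/50) * x ^ 2 * Real.log x ^ 2 * y ^ 1 + (-16) * x ^ 3 * y ^ 1 + (12) * x ^ 3 * y ^ 2 + (-76/5) * x ^ 3 * Real.log x * y ^ 1 + (8) * x ^ 4 * y ^ 1 + (19/5) * (1 - x - y) ^ 2 + (-38/5) * ((1 - x - y) ^ 1 * ((1 - x - y) * Real.log (1 - x - y))) + (-361/675) * (1 - x - y) ^ 3 + (361/225) * ((1 - x - y) ^ 2 * ((1 - x - y) * Real.log (1 - x - y))) + (-361/150) * ((1 - x - y) ^ 1 * ((1 - x - y) * Real.log (1 - x - y)) ^ 2) + (-19/40) * (1 - x - y) ^ 4 + (19/10) * ((1 - x - y) ^ 3 * ((1 - x - y) * Real.log (1 - x - y))) + (-19/10) * x * (1 - x - y) ^ 2 + (19/5)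 * x * ((1 - x - y) ^ 1 * ((1 - x - y) * Real.log (1 - x - y))) + (38/45) * x * (1 - x - y) ^ 3 + (-38/15) * x * ((1 - x - y) ^ 2 * ((1 - x - y) * Real.log (1 - x - y))) + (361/100) * x * Real.log x * (1 - x - y) ^ 2 + (-361/50) * x * Real.log x * ((1 - x - y) ^ 1 * ((1 - x - y) * Real.log (1 - x - y)))) :=
      ((((((((((((((((((((((((((((((((((((((((((continuous_const.mul (continuous_pow 1)).add (continuous_const.mul (continuous_pow 2))).add (continuous_const.mul ((continuous_pow 1).mul hw))).add (continuous_const.mul (continuous_pow 3))).add (continuous_const.mul ((continuous_pow 2).mul hw))).add (continuous_const.mul ((continuous_pow 1).mul (hw.pow 2)))).add (continuous_const.mul (continuous_pow 4))).add (continuous_const.mul ((continuous_pow 3).mul hw))).add (continuous_const.mul (continuous_pow 5))).add (continuous_const.mul (continuous_pow 1))).add (continuous_const.mul (continuous_pow 2))).add (continuous_const.mul ((continuous_pow 1).mul hw))).add (continuous_const.mul (continuous_pow 3))).add (continuous_const.mul ((continuous_pow 2).mul hw))).add (continuous_const.mul (continuous_pow 4))).add (continuous_const.mul (continuous_pow 1))).add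 (continuous_const.mul (continuous_pow 2))).add (continuous_const.mul ((continuous_pow 1).mul hw))).add (continuous_const.mul (continuous_pow 3))).add (continuous_const.mul (continuous_pow 2))).add (continuous_const.mul ((continuous_pow 1).mul hw))).add (continuous_const.mul (continuous_pow 3))).add (continuous_const.mul (continuous_pow 1))).add (continuous_const.mul (continuous_pow 2))).add (continuous_const.mul (continuous_pow 1))).add (continuous_const.mul (continuous_pow 1))).add (continuous_const.mul (continuous_pow 2))).add (continuous_const.mul (continuous_pow 1))).add (continuous_const.mul (continuous_pow 1))).add (continuous_const.mul (hzc.pow 2))).add (continuous_const.mul ((hzc.pow 1).mul hv))).add (continuous_const.mul (hzc.pow 3))).add (continuous_const.mul ((hzc.pow 2).mul hv))).add (continuous_const.mul ((hzc.pow 1).mul (hv.pow 2)))).add (continuous_const.mul (hzc.pow 4))).add (continuous_const.mul ((hzc.pow 3).mul hv))).add (continuous_const.mul (hzc.pow 2))).add (continuous_const.mul ((hzc.pow 1).mul hv))).add (continuous_const.mul (hzc.pow 3))).add (continuous_const.mul ((hzc.pow 2).mul hv))).add (continuous_const.mul (hzc.pow 2))).add (continuous_const.mul ((hzc.pow 1).mul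 hv)))
    apply hat.congr
    intro y
    ring
  case deriv =>
    intro y hy
    have hy0 : (0:ℝ) < y := hy.1
    have hz0 : (0:ℝ) < 1 - x - y := by
      have := hy.2
      simp only [Set.mem_Ioo] at hy
      linarith [hy.2]
    have hzd : HasDerivAt (fun y : ℝ => 1 - x - y) (-1) y := by
      simpa using (hasDerivAt_id y).const_sub (1 - x)
    have hlog : HasDerivAt Real.log y⁻¹ y := Real.hasDerivAt_log hy0.ne'
    have hLz : HasDerivAt (fun y : ℝ => Real.log (1 - x - y)) (-(1 - x - y)⁻¹) y := by
      have h := (Real.hasDerivAt_log hz0.ne').comp y hzd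
      simpa [Function.comp_def] using h
    have hd := (((((((((((((((((((((((((((((((((((((((((((hasDerivAt_pow 1 y).const_mul ((2))).add ((hasDerivAt_pow 2 y).const_mul ((21/10)))).add (((hasDerivAt_pow 2 y).mul hlog).const_mul ((19/5)))).add ((hasDerivAt_pow 3 y).const_mul ((121/675)))).add (((hasDerivAt_pow 3 y).mul hlog).const_mul ((779/225)))).add (((hasDerivAt_pow 3 y).mul (hlog.pow 2)).const_mul ((361/150)))).add ((hasDerivAt_pow 4 y).const_mul ((-61/40)))).add (((hasDerivAt_pow 4 y).mul hlog).const_mul ((-19/10)))).add ((hasDerivAt_pow 5 y).const_mul ((2/5)))).add ((hasDerivAt_pow 1 y).const_mul ((8) * x))).add ((hasDerivAt_pow 2 y).const_mul ((-9/5) * x))).add (((hasDerivAt_pow 2 y).mul hlog).const_mul ((38/5) * x))).add ((hasDerivAt_pow 3 y).const_mul ((-122/15) * x))).add (((hasDerivAt_pow 3 y).mul hlog).const_mul ((-38/5) * x))).add ((hasDerivAt_pow 4 y).const_mul ((3) * x))).add ((hasDerivAt_pow 1 y).const_mul ((38/5) * x * Real.log x))).add ((hasDerivAt_pow 2 y).const_mul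 ((399/100) * x * Real.log x))).add (((hasDerivAt_pow 2 y).mul hlog).const_mul ((361/50) * x * Real.log x))).add ((hasDerivAt_pow 3 y).const_mul ((-38/15) * x * Real.log x))).add ((hasDerivAt_pow 2 y).const_mul ((-81/5) * x ^ 2))).add (((hasDerivAt_pow 2 y).mul hlog).const_mul ((-38/5) * x ^ 2))).add ((hasDerivAt_pow 3 y).const_mul ((26/3) * x ^ 2))).add ((hasDerivAt_pow 1 y).const_mul ((76/5) * x ^ 2 * Real.log x))).add ((hasDerivAt_pow 2 y).const_mul ((-57/5) * x ^ 2 * Real.log x))).add ((hasDerivAt_pow 1 y).const_mul ((361/50) * x ^ 2 * Real.log x ^ 2))).add ((hasDerivAt_pow 1 y).const_mul ((-16) * x ^ 3))).add ((hasDerivAt_pow 2 y).const_mul ((12) * x ^ 3))).add ((hasDerivAt_pow 1 y).const_mul ((-76/5) * x ^ 3 * Real.log x))).add ((hasDerivAt_pow 1 y).const_mul ((8) * x ^ 4))).add ((hzd.pow 2).const_mul ((19/5)))).add (((hzd.pow 2).mul hLz).const_mul ((-38/5)))).add ((hzd.pow 3).const_mul ((-361/675)))).add (((hzd.pow 3).mul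 hLz).const_mul ((361/225)))).add (((hzd.pow 3).mul (hLz.pow 2)).const_mul ((-361/150)))).add ((hzd.pow 4).const_mul ((-19/40)))).add (((hzd.pow 4).mul hLz).const_mul ((19/10)))).add ((hzd.pow 2).const_mul ((-19/10) * x))).add (((hzd.pow 2).mul hLz).const_mul ((19/5) * x))).add ((hzd.pow 3).const_mul ((38/45) * x))).add (((hzd.pow 3).mul hLz).const_mul ((-38/15) * x))).add ((hzd.pow 2).const_mul ((361/100) * x * Real.log x))).add (((hzd.pow 2).mul hLz).const_mul ((-361/50) * x * Real.log x)))
    refine hd.congr_deriv ?_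
    simp only [Nat.cast_ofNat, Nat.cast_one, Pi.pow_apply]
    field_simp
    ring
  have hsplit : (∫ y in (0:ℝ)..(1 - x), 2 * (1 + (x + y) * (y + 2 * (1 - x - y)) + (19 / 10) * (x * Real.log x + y * Real.log y + (1 - x - y) * Real.log (1 - x - y))) ^ 2)
      = (∫ y in (0:ℝ)..(1 - x), (2 * (1 + (x + y) * (y + 2 * (1 - x - y)) + (19 / 10) * (x * Real.log x + y * Real.log y + (1 - x - y) * Real.log (1 - x - y))) ^ 2 - (361/25) * ((y * Real.log y) * ((1 - x - y) * Real.log (1 - x - y)))))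
        + ∫ y in (0:ℝ)..(1 - x), (361/25) * ((y * Real.log y) * ((1 - x - y) * Real.log (1 - x - y))) := by
    rw [← intervalIntegral.integral_add hint1 hint2]
    apply intervalIntegral.integral_congr
    intro y _
    ring
  rw [hsplit, hFTC, intervalIntegral.integral_const_mul, cross_eval x hx0 hx1]
  beta_reduce
  rw [show (1:ℝ) - x - (1 - x) = 0 by ring]
  rw [Real.log_zero]
  rw [show (1:ℝ) - x - 0 = 1 - x by ring]
  ring

end QSVar

open QSVar Real MeasureTheory Set intervalIntegral in
set_option maxHeartbeats 4000000 in
/-- Second-moment integral for the comparisons toll of Yaroslavskiy's Quicksort: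
`2·E[(1 + (D₁+D₂)(D₂+2D₃) + (19/10)·Σ Dⱼ ln Dⱼ)²] = 2231/360 − (361/600)π²`. -/
theorem comparisons_variance_constant :
    2 * (∫ x in (0:ℝ)..1, ∫ y in (0:ℝ)..(1 - x),
        2 * (1 + (x + y) * (y + 2 * (1 - x - y)) +
            (19 / 10) * (x * Real.log x + y * Real.log y
              + (1 - x - y) * Real.log (1 - x - y))) ^ 2)
      = 2231 / 360 - (361 / 600) * Real.pi ^ 2 := by
  have h1 : (∫ x in (0:ℝ)..1, ∫ y in (0:ℝ)..(1 - x), 2 * (1 + (x + y) * (y + 2 * (1 - x - y)) + (19 / 10) * (x * Real.log x + y * Real.log y + (1 - x - y) * Real.log (1 - x - y))) ^ 2)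
      = ∫ x in (0:ℝ)..1, ((2) * (1 - x) + (-17/10) * (1 - x) ^ 2 + (1019/180) * (1 - x) ^ 3 + (-21/20) * (1 - x) ^ 4 + (2/5) * (1 - x) ^ 5 + (8) * x * (1 - x) + (1/10) * x * (1 - x) ^ 2 + (-404/45) * x * (1 - x) ^ 3 + (3) * x * (1 - x) ^ 4 + (-81/5) * x ^ 2 * (1 - x) ^ 2 + (26/3) * x ^ 2 * (1 - x) ^ 3 + (-16) * x ^ 3 * (1 - x) + (12) * x ^ 3 * (1 - x) ^ 2 + (8) * x ^ 4 * (1 - x) + (57/5) * (1 - x) ^ 2 * Real.log (1 - x) + (-323/150) * (1 - x) ^ 3 * Real.log (1 - x) + (-19/5) * (1 - x) ^ 4 * Real.log (1 - x) + (19/5) * x * (1 - x) ^ 2 * Real.log (1 - x) + (-76/15) * x * (1 - x) ^ 3 * Real.log (1 - x) + (-38/5) * x ^ 2 * (1 - x) ^ 2 * Real.log (1 - x) + (361/50) * (1 - x) ^ 3 * Real.log (1 - x) ^ 2 + (38/5) * x * (1 - x) * Real.log x + (19/50) * x * (1 - x) ^ 2 * Real.log x + (-38/15) * x * (1 - x)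 ^ 3 * Real.log x + (76/5) * x ^ 2 * (1 - x) * Real.log x + (-57/5) * x ^ 2 * (1 - x) ^ 2 * Real.log x + (-76/5) * x ^ 3 * (1 - x) * Real.log x + (361/50) * x ^ 2 * (1 - x) * Real.log x ^ 2 + (-361/900) * Real.pi ^ 2 * (1 - x) ^ 3 + (361/25) * (x ^ 1 * (Real.log x * Real.log (1 - x))) + (-722/25) * (x ^ 2 * (Real.log x * Real.log (1 - x))) + (361/25) * (x ^ 3 * (Real.log x * Real.log (1 - x)))) := by
    rw [intervalIntegral.integral_of_le zero_le_one, intervalIntegral.integral_of_le zero_le_one,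
        MeasureTheory.integral_Ioc_eq_integral_Ioo, MeasureTheory.integral_Ioc_eq_integral_Ioo]
    apply MeasureTheory.setIntegral_congr_fun measurableSet_Ioo
    intro x hx
    exact inner_eval x hx.1 hx.2
  rw [h1]
  have hU : Continuous (fun x : ℝ => x * Real.log x) := Real.continuous_mul_log
  have hV : Continuous (fun x : ℝ => (1 - x) * Real.log (1 - x)) := contV
  have hz1 : Continuous (fun x : ℝ => 1 - x) := continuous_const.sub continuous_id
  have hBc : ContinuousOn (fun x : ℝ => Real.log x * Real.log (1 - x)) (Icc 0 1) :=
    contOn_log_mul_log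
  have hGeasyCont : Continuous (fun x : ℝ => (2) * (1 - x) + (-17/10) * (1 - x) ^ 2 + (1019/180) * (1 - x) ^ 3 + (-21/20) * (1 - x) ^ 4 + (2/5) * (1 - x) ^ 5 + (8) * x * (1 - x) + (1/10) * x * (1 - x) ^ 2 + (-404/45) * x * (1 - x) ^ 3 + (3) * x * (1 - x) ^ 4 + (-81/5) * x ^ 2 * (1 - x) ^ 2 + (26/3) * x ^ 2 * (1 - x) ^ 3 + (-16) * x ^ 3 * (1 - x) + (12) * x ^ 3 * (1 - x) ^ 2 + (8) * x ^ 4 * (1 - x) + (57/5) * (1 - x) ^ 2 * Real.log (1 - x) + (-323/150) * (1 - x) ^ 3 * Real.log (1 - x) + (-19/5) * (1 - x) ^ 4 * Real.log (1 - x) + (19/5) * x * (1 - x) ^ 2 * Real.log (1 - x) + (-76/15) * x * (1 - x) ^ 3 * Real.log (1 - x) + (-38/5) * x ^ 2 * (1 - x) ^ 2 * Real.log (1 - x) + (361/50) * (1 - x) ^ 3 * Real.log (1 - x) ^ 2 + (38/5) * x * (1 - x) * Real.log x + (19/50) * x * (1 - x) ^ 2 * Real.log x + (-38/15) * x * (1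 - x) ^ 3 * Real.log x + (76/5) * x ^ 2 * (1 - x) * Real.log x + (-57/5) * x ^ 2 * (1 - x) ^ 2 * Real.log x + (-76/5) * x ^ 3 * (1 - x) * Real.log x + (361/50) * x ^ 2 * (1 - x) * Real.log x ^ 2 + (-361/900) * Real.pi ^ 2 * (1 - x) ^ 3) := by
    have hat : Continuous (fun x : ℝ => (2) * ((x ^ 0 * (1 - x) ^ 1) * ((x * Real.log x) ^ 0 * ((1 - x) * Real.log (1 - x)) ^ 0)) + (-17/10) * ((x ^ 0 * (1 - x) ^ 2) * ((x * Real.log x) ^ 0 * ((1 - x) * Real.log (1 - x)) ^ 0)) + (1019/180) * ((x ^ 0 * (1 - x) ^ 3) * ((x * Real.log x) ^ 0 * ((1 - x) * Real.log (1 - x)) ^ 0)) + (-21/20) * ((x ^ 0 * (1 - x) ^ 4) * ((x * Real.log x) ^ 0 * ((1 - x) * Real.log (1 - x)) ^ 0)) + (2/5) * ((x ^ 0 * (1 - x) ^ 5) * ((x * Real.log x) ^ 0 * ((1 - x) * Real.log (1 - x)) ^ 0)) + (8) * ((x ^ 1 * (1 - x) ^ 1) * ((x * Real.log x) ^ 0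 * ((1 - x) * Real.log (1 - x)) ^ 0)) + (1/10) * ((x ^ 1 * (1 - x) ^ 2) * ((x * Real.log x) ^ 0 * ((1 - x) * Real.log (1 - x)) ^ 0)) + (-404/45) * ((x ^ 1 * (1 - x) ^ 3) * ((x * Real.log x) ^ 0 * ((1 - x) * Real.log (1 - x)) ^ 0)) + (3) * ((x ^ 1 * (1 - x) ^ 4) * ((x * Real.log x) ^ 0 * ((1 - x) * Real.log (1 - x)) ^ 0)) + (-81/5) * ((x ^ 2 * (1 - x) ^ 2) * ((x * Real.log x) ^ 0 * ((1 - x) * Real.log (1 - x)) ^ 0)) + (26/3) * ((x ^ 2 * (1 - x) ^ 3) * ((x * Real.log x) ^ 0 * ((1 - x) * Real.log (1 - x)) ^ 0)) + (-16) * ((x ^ 3 * (1 - x) ^ 1) * ((x * Real.log x) ^ 0 * ((1 - x) * Real.log (1 - x)) ^ 0)) + (12) * ((x ^ 3 * (1 - x) ^ 2) * ((x * Real.log x) ^ 0 * ((1 - x) * Real.log (1 - x)) ^ 0)) + (8) * ((x ^ 4 * (1 - x) ^ 1) * ((x * Real.log x) ^ 0 * ((1 - x) * Real.log (1 - x)) ^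 0)) + (57/5) * ((x ^ 0 * (1 - x) ^ 1) * ((x * Real.log x) ^ 0 * ((1 - x) * Real.log (1 - x)) ^ 1)) + (-323/150) * ((x ^ 0 * (1 - x) ^ 2) * ((x * Real.log x) ^ 0 * ((1 - x) * Real.log (1 - x)) ^ 1)) + (-19/5) * ((x ^ 0 * (1 - x) ^ 3) * ((x * Real.log x) ^ 0 * ((1 - x) * Real.log (1 - x)) ^ 1)) + (19/5) * ((x ^ 1 * (1 - x) ^ 1) * ((x * Real.log x) ^ 0 * ((1 - x) * Real.log (1 - x)) ^ 1)) + (-76/15) * ((x ^ 1 * (1 - x) ^ 2) * ((x * Real.log x) ^ 0 * ((1 - x) * Real.log (1 - x)) ^ 1)) + (-38/5) * ((x ^ 2 * (1 - x) ^ 1) * ((x * Real.log x) ^ 0 * ((1 - x) * Real.log (1 - x)) ^ 1)) + (361/50) * ((x ^ 0 * (1 - x) ^ 1) * ((x * Real.log x) ^ 0 * ((1 - x) * Real.log (1 - x)) ^ 2)) + (38/5) * ((x ^ 0 * (1 - x) ^ 1) * ((x * Real.log x) ^ 1 * ((1 - x) * Real.log (1 - x)) ^ 0)) + (19/50) * ((x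 ^ 0 * (1 - x) ^ 2) * ((x * Real.log x) ^ 1 * ((1 - x) * Real.log (1 - x)) ^ 0)) + (-38/15) * ((x ^ 0 * (1 - x) ^ 3) * ((x * Real.log x) ^ 1 * ((1 - x) * Real.log (1 - x)) ^ 0)) + (76/5) * ((x ^ 1 * (1 - x) ^ 1) * ((x * Real.log x) ^ 1 * ((1 - x) * Real.log (1 - x)) ^ 0)) + (-57/5) * ((x ^ 1 * (1 - x) ^ 2) * ((x * Real.log x) ^ 1 * ((1 - x) * Real.log (1 - x)) ^ 0)) + (-76/5) * ((x ^ 2 * (1 - x) ^ 1) * ((x * Real.log x) ^ 1 * ((1 - x) * Real.log (1 - x)) ^ 0)) + (361/50) * ((x ^ 0 * (1 - x) ^ 1) * ((x * Real.log x) ^ 2 * ((1 - x) * Real.log (1 - x)) ^ 0)) + ((-361/900) * Real.pi ^ 2) * (x ^ 0 * (1 - x) ^ 3)) :=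
      (((((((((((((((((((((((((((((continuous_const.mul (((continuous_pow 0).mul (hz1.pow 1)).mul ((hU.pow 0).mul (hV.pow 0)))).add (continuous_const.mul (((continuous_pow 0).mul (hz1.pow 2)).mul ((hU.pow 0).mul (hV.pow 0))))).add (continuous_const.mul (((continuous_pow 0).mul (hz1.pow 3)).mul ((hU.pow 0).mul (hV.pow 0))))).add (continuous_const.mul (((continuous_pow 0).mul (hz1.pow 4)).mul ((hU.pow 0).mul (hV.pow 0))))).add (continuous_const.mul (((continuous_pow 0).mul (hz1.pow 5)).mul ((hU.pow 0).mul (hV.pow 0))))).add (continuous_const.mul (((continuous_pow 1).mul (hz1.pow 1)).mul ((hU.pow 0).mul (hV.pow 0))))).add (continuous_const.mul (((continuous_pow 1).mul (hz1.pow 2)).mul ((hU.pow 0).mul (hV.pow 0))))).add (continuous_const.mul (((continuous_pow 1).mul (hz1.pow 3)).mul ((hU.pow 0).mul (hV.pow 0))))).add (continuous_const.mul (((continuous_pow 1).mul (hz1.pow 4)).mul ((hU.pow 0).mul (hV.pow 0))))).add (continuous_const.mul (((continuous_pow 2).mul (hz1.pow 2)).mul ((hU.pow 0).mul (hV.pow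 0))))).add (continuous_const.mul (((continuous_pow 2).mul (hz1.pow 3)).mul ((hU.pow 0).mul (hV.pow 0))))).add (continuous_const.mul (((continuous_pow 3).mul (hz1.pow 1)).mul ((hU.pow 0).mul (hV.pow 0))))).add (continuous_const.mul (((continuous_pow 3).mul (hz1.pow 2)).mul ((hU.pow 0).mul (hV.pow 0))))).add (continuous_const.mul (((continuous_pow 4).mul (hz1.pow 1)).mul ((hU.pow 0).mul (hV.pow 0))))).add (continuous_const.mul (((continuous_pow 0).mul (hz1.pow 1)).mul ((hU.pow 0).mul (hV.pow 1))))).add (continuous_const.mul (((continuous_pow 0).mul (hz1.pow 2)).mul ((hU.pow 0).mul (hV.pow 1))))).add (continuous_const.mul (((continuous_pow 0).mul (hz1.pow 3)).mul ((hU.pow 0).mul (hV.pow 1))))).add (continuous_const.mul (((continuous_pow 1).mul (hz1.pow 1)).mul ((hU.pow 0).mul (hV.pow 1))))).add (continuous_const.mul (((continuous_pow 1).mul (hz1.pow 2)).mul ((hU.pow 0).mul (hV.pow 1))))).add (continuous_const.mul (((continuous_pow 2).mul (hz1.pow 1)).mul ((hU.pow 0).mul (hV.pow 1))))).add (continuous_const.mul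 (((continuous_pow 0).mul (hz1.pow 1)).mul ((hU.pow 0).mul (hV.pow 2))))).add (continuous_const.mul (((continuous_pow 0).mul (hz1.pow 1)).mul ((hU.pow 1).mul (hV.pow 0))))).add (continuous_const.mul (((continuous_pow 0).mul (hz1.pow 2)).mul ((hU.pow 1).mul (hV.pow 0))))).add (continuous_const.mul (((continuous_pow 0).mul (hz1.pow 3)).mul ((hU.pow 1).mul (hV.pow 0))))).add (continuous_const.mul (((continuous_pow 1).mul (hz1.pow 1)).mul ((hU.pow 1).mul (hV.pow 0))))).add (continuous_const.mul (((continuous_pow 1).mul (hz1.pow 2)).mul ((hU.pow 1).mul (hV.pow 0))))).add (continuous_const.mul (((continuous_pow 2).mul (hz1.pow 1)).mul ((hU.pow 1).mul (hV.pow 0))))).add (continuous_const.mul (((continuous_pow 0).mul (hz1.pow 1)).mul ((hU.pow 2).mul (hV.pow 0))))).add (continuous_const.mul ((continuous_pow 0).mul (hz1.pow 3))))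
    apply hat.congr
    intro x
    ring
  have hi0 : IntervalIntegrable (fun x : ℝ => (2) * (1 - x) + (-17/10) * (1 - x) ^ 2 + (1019/180) * (1 - x) ^ 3 + (-21/20) * (1 - x) ^ 4 + (2/5) * (1 - x) ^ 5 + (8) * x * (1 - x) + (1/10) * x * (1 - x) ^ 2 + (-404/45) * x * (1 - x) ^ 3 + (3) * x * (1 - x) ^ 4 + (-81/5) * x ^ 2 * (1 - x) ^ 2 + (26/3) * x ^ 2 * (1 - x) ^ 3 + (-16) * x ^ 3 * (1 - x) + (12) * x ^ 3 * (1 - x) ^ 2 + (8) * x ^ 4 * (1 - x) + (57/5) * (1 - x) ^ 2 * Real.log (1 - x) + (-323/150) * (1 - x) ^ 3 * Real.log (1 - x) + (-19/5) * (1 - x) ^ 4 * Real.log (1 - x) + (19/5) * x * (1 - x) ^ 2 * Real.log (1 - x) + (-76/15) * x * (1 - x) ^ 3 * Real.log (1 - x) + (-38/5) * x ^ 2 * (1 - x) ^ 2 * Real.log (1 - x) + (361/50) * (1 - x) ^ 3 * Real.log (1 - x) ^ 2 + (38/5) * x * (1 - x) * Real.log x + (19/50) * x * (1 - x) ^ 2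 * Real.log x + (-38/15) * x * (1 - x) ^ 3 * Real.log x + (76/5) * x ^ 2 * (1 - x) * Real.log x + (-57/5) * x ^ 2 * (1 - x) ^ 2 * Real.log x + (-76/5) * x ^ 3 * (1 - x) * Real.log x + (361/50) * x ^ 2 * (1 - x) * Real.log x ^ 2 + (-361/900) * Real.pi ^ 2 * (1 - x) ^ 3) volume 0 1 :=
    hGeasyCont.intervalIntegrable _ _
  have hia : IntervalIntegrable (fun x : ℝ => x ^ 1 * (Real.log x * Real.log (1 - x))) volume 0 1 := by
    apply ContinuousOn.intervalIntegrable
    rw [uIcc_of_le zero_le_one]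
    exact (continuous_pow 1).continuousOn.mul hBc
  have hib : IntervalIntegrable (fun x : ℝ => x ^ 2 * (Real.log x * Real.log (1 - x))) volume 0 1 := by
    apply ContinuousOn.intervalIntegrable
    rw [uIcc_of_le zero_le_one]
    exact (continuous_pow 2).continuousOn.mul hBc
  have hic : IntervalIntegrable (fun x : ℝ => x ^ 3 * (Real.log x * Real.log (1 - x))) volume 0 1 := by
    apply ContinuousOn.intervalIntegrable
    rw [uIcc_of_le zero_le_one]
    exact (continuous_pow 3).continuousOn.mul hBc
  have hsplit2 : (∫ x in (0:ℝ)..1, ((2) * (1 - x) + (-17/10) * (1 - x) ^ 2 + (1019/180) * (1 - x) ^ 3 + (-21/20) * (1 - x) ^ 4 + (2/5) * (1 - x) ^ 5 + (8) * x * (1 - x) + (1/10) * x * (1 - x) ^ 2 + (-404/45) * x * (1 - x) ^ 3 + (3) * x * (1 - x) ^ 4 + (-81/5) * x ^ 2 * (1 - x) ^ 2 + (26/3) * x ^ 2 * (1 - x) ^ 3 + (-16) * x ^ 3 * (1 - x) + (12) * x ^ 3 * (1 - x) ^ 2 + (8) * x ^ 4 * (1 - x) + (57/5) * (1 - x) ^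 2 * Real.log (1 - x) + (-323/150) * (1 - x) ^ 3 * Real.log (1 - x) + (-19/5) * (1 - x) ^ 4 * Real.log (1 - x) + (19/5) * x * (1 - x) ^ 2 * Real.log (1 - x) + (-76/15) * x * (1 - x) ^ 3 * Real.log (1 - x) + (-38/5) * x ^ 2 * (1 - x) ^ 2 * Real.log (1 - x) + (361/50) * (1 - x) ^ 3 * Real.log (1 - x) ^ 2 + (38/5) * x * (1 - x) * Real.log x + (19/50) * x * (1 - x) ^ 2 * Real.log x + (-38/15) * x * (1 - x) ^ 3 * Real.log x + (76/5) * x ^ 2 * (1 - x) * Real.log x + (-57/5) * x ^ 2 * (1 - x) ^ 2 * Real.log x + (-76/5) * x ^ 3 * (1 - x) * Real.log x + (361/50) * x ^ 2 * (1 - x) * Real.log x ^ 2 + (-361/900) * Real.pi ^ 2 * (1 - x) ^ 3 + (361/25) * (x ^ 1 * (Real.log x * Real.log (1 - x))) + (-722/25) * (x ^ 2 * (Real.log x * Real.log (1 - x))) + (361/25) * (x ^ 3 * (Real.log x * Real.log (1 - x)))))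
      = (∫ x in (0:ℝ)..1, ((2) * (1 - x) + (-17/10) * (1 - x) ^ 2 + (1019/180) * (1 - x) ^ 3 + (-21/20) * (1 - x) ^ 4 + (2/5) * (1 - x) ^ 5 + (8) * x * (1 - x) + (1/10) * x * (1 - x) ^ 2 + (-404/45) * x * (1 - x) ^ 3 + (3) * x * (1 - x) ^ 4 + (-81/5) * x ^ 2 * (1 - x) ^ 2 + (26/3) * x ^ 2 * (1 - x) ^ 3 + (-16) * x ^ 3 * (1 - x) + (12) * x ^ 3 * (1 - x) ^ 2 + (8) * x ^ 4 * (1 - x) + (57/5) * (1 - x) ^ 2 * Real.log (1 - x) + (-323/150) * (1 - x) ^ 3 * Real.log (1 - x) + (-19/5) * (1 - x) ^ 4 * Real.log (1 - x) + (19/5) * x * (1 - x) ^ 2 * Real.log (1 - x) + (-76/15) * x * (1 - x) ^ 3 * Real.log (1 - x) + (-38/5) * x ^ 2 * (1 - x) ^ 2 * Real.log (1 - x) + (361/50) * (1 - x) ^ 3 * Real.log (1 - x) ^ 2 + (38/5) * x * (1 - x) * Real.log x + (19/50) * x * (1 - x) ^ 2 * Real.log x + (-38/15) * x * (1 - x)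 ^ 3 * Real.log x + (76/5) * x ^ 2 * (1 - x) * Real.log x + (-57/5) * x ^ 2 * (1 - x) ^ 2 * Real.log x + (-76/5) * x ^ 3 * (1 - x) * Real.log x + (361/50) * x ^ 2 * (1 - x) * Real.log x ^ 2 + (-361/900) * Real.pi ^ 2 * (1 - x) ^ 3))
        + (((361/25) * ∫ x in (0:ℝ)..1, x ^ 1 * (Real.log x * Real.log (1 - x)))
          + ((-722/25) * ∫ x in (0:ℝ)..1, x ^ 2 * (Real.log x * Real.log (1 - x)))
          + ((361/25) * ∫ x in (0:ℝ)..1, x ^ 3 * (Real.log x * Real.log (1 - x)))) := by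
    rw [← intervalIntegral.integral_const_mul, ← intervalIntegral.integral_const_mul,
        ← intervalIntegral.integral_const_mul,
        ← intervalIntegral.integral_add (hia.const_mul _) (hib.const_mul _),
        ← intervalIntegral.integral_add ((hia.const_mul _).add (hib.const_mul _)) (hic.const_mul _),
        ← intervalIntegral.integral_add hi0
          (((hia.const_mul _).add (hib.const_mul _)).add (hic.const_mul _))]
    apply intervalIntegral.integral_congr
    intro x _
    ring
  have hFTCB := intervalIntegral.integral_eq_sub_of_hasDerivAt_of_le
    (f := fun x : ℝ => ((-361/900) * Real.pi ^ 2) * x ^ 1 + ((361/600) * Real.pi ^ 2) * x ^ 2 + ((-361/900) * Real.pi ^ 2) * x ^ 3 + ((361/3600) * Real.pi ^ 2) * x ^ 4 + (38/45) * (1 - x) ^ 3 + (-38/15) * ((1 - x) ^ 3 * Real.log (1 - x)) + (57/1600) * (1 - x) ^ 4 + (-57/400) * ((1 - x) ^ 4 * Real.log (1 - x)) + (-361/200) * ((1 - x) ^ 4 * Real.log (1 - x) ^ 2) + (-19/75) * (1 - x) ^ 5 + (19/15) * ((1 - x) ^ 5 * Real.log (1 - x)) + (239/45) * x ^ 1 +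 (-6293/900) * x ^ 2 + (817/300) * (x ^ 2 * Real.log x) + (11497/2700) * x ^ 3 + (-133/225) * (x ^ 3 * Real.log x) + (361/150) * (x ^ 3 * Real.log x ^ 2) + (-32731/14400) * x ^ 4 + (-1121/400) * (x ^ 4 * Real.log x) + (-361/200) * (x ^ 4 * Real.log x ^ 2) + (1163/900) * x ^ 5 + (19/15) * (x ^ 5 * Real.log x) + (-31/90) * x ^ 6)
    (f' := fun x : ℝ => (2) * (1 - x) + (-17/10) * (1 - x) ^ 2 + (1019/180) * (1 - x) ^ 3 + (-21/20) * (1 - x) ^ 4 + (2/5) * (1 - x) ^ 5 + (8) * x * (1 - x) + (1/10) * x * (1 - x) ^ 2 + (-404/45) * x * (1 - x) ^ 3 + (3) * x * (1 - x) ^ 4 + (-81/5) * x ^ 2 * (1 - x) ^ 2 + (26/3) * x ^ 2 * (1 - x) ^ 3 + (-16) * x ^ 3 * (1 - x) + (12) * x ^ 3 * (1 - x) ^ 2 + (8) * x ^ 4 * (1 - x) + (57/5) * (1 - x) ^ 2 * Real.log (1 - x) + (-323/150) * (1 - x) ^ 3 * Real.log (1 - x) + (-19/5) * (1 - x) ^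 4 * Real.log (1 - x) + (19/5) * x * (1 - x) ^ 2 * Real.log (1 - x) + (-76/15) * x * (1 - x) ^ 3 * Real.log (1 - x) + (-38/5) * x ^ 2 * (1 - x) ^ 2 * Real.log (1 - x) + (361/50) * (1 - x) ^ 3 * Real.log (1 - x) ^ 2 + (38/5) * x * (1 - x) * Real.log x + (19/50) * x * (1 - x) ^ 2 * Real.log x + (-38/15) * x * (1 - x) ^ 3 * Real.log x + (76/5) * x ^ 2 * (1 - x) * Real.log x + (-57/5) * x ^ 2 * (1 - x) ^ 2 * Real.log x + (-76/5) * x ^ 3 * (1 - x) * Real.log x + (361/50) * x ^ 2 * (1 - x) * Real.log x ^ 2 + (-361/900) * Real.pi ^ 2 * (1 - x) ^ 3)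
    (a := 0) (b := 1) zero_le_one ?contB ?derivB hi0
  case contB =>
    apply Continuous.continuousOn
    have hat : Continuous (fun x : ℝ => ((-361/900) * Real.pi ^ 2) * x ^ 1 + ((361/600) * Real.pi ^ 2) * x ^ 2 + ((-361/900) * Real.pi ^ 2) * x ^ 3 + ((361/3600) * Real.pi ^ 2) * x ^ 4 + (38/45) * (1 - x) ^ 3 + (-38/15) * ((1 - x) ^ 2 * ((1 - x) * Real.log (1 - x))) + (57/1600) * (1 - x) ^ 4 + (-57/400) * ((1 - x) ^ 3 * ((1 - x) * Real.log (1 - x))) + (-361/200) * ((1 - x) ^ 2 * ((1 - x) * Real.log (1 - x)) ^ 2) + (-19/75) * (1 - x) ^ 5 + (19/15) * ((1 - x) ^ 4 * ((1 - x) * Real.log (1 - x))) + (239/45) * x ^ 1 + (-6293/900) * x ^ 2 + (817/300) * (x ^ 1 * (x * Real.log x)) + (11497/2700) * x ^ 3 + (-133/225) * (x ^ 2 * (x * Real.log x)) + (361/150) * (x ^ 1 * (x * Real.log x) ^ 2) + (-32731/14400) * x ^ 4 + (-1121/400) * (x ^ 3 * (x * Real.log x)) + (-361/200) * (x ^ 2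 * (x * Real.log x) ^ 2) + (1163/900) * x ^ 5 + (19/15) * (x ^ 4 * (x * Real.log x)) + (-31/90) * x ^ 6) :=
      (((((((((((((((((((((((continuous_const.mul (continuous_pow 1)).add (continuous_const.mul (continuous_pow 2))).add (continuous_const.mul (continuous_pow 3))).add (continuous_const.mul (continuous_pow 4))).add (continuous_const.mul (hz1.pow 3))).add (continuous_const.mul ((hz1.pow 2).mul hV))).add (continuous_const.mul (hz1.pow 4))).add (continuous_const.mul ((hz1.pow 3).mul hV))).add (continuous_const.mul ((hz1.pow 2).mul (hV.pow 2)))).add (continuous_const.mul (hz1.pow 5))).add (continuous_const.mul ((hz1.pow 4).mul hV))).add (continuous_const.mul (continuous_pow 1))).add (continuous_const.mul (continuous_pow 2))).add (continuous_const.mul ((continuous_pow 1).mul hU))).add (continuous_const.mul (continuous_pow 3))).add (continuous_const.mul ((continuous_pow 2).mul hU))).add (continuous_const.mul ((continuous_pow 1).mul (hU.pow 2)))).add (continuous_const.mul (continuous_pow 4))).add (continuous_const.mul ((continuous_pow 3).mul hU))).add (continuous_const.mul ((continuous_pow 2).mul (hU.pow 2)))).add (continuous_const.mul (continuous_pow 5))).add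 (continuous_const.mul ((continuous_pow 4).mul hU))).add (continuous_const.mul (continuous_pow 6)))
    apply hat.congr
    intro x
    ring
  case derivB =>
    intro x hx
    have hx0 : (0:ℝ) < x := hx.1
    have hs1 : (0:ℝ) < 1 - x := by
      simp only [Set.mem_Ioo] at hx
      linarith [hx.2]
    have hsd : HasDerivAt (fun x : ℝ => 1 - x) (-1) x := by
      simpa using (hasDerivAt_id x).const_sub 1
    have hlogx : HasDerivAt Real.log x⁻¹ x := Real.hasDerivAt_log hx0.ne'
    have hLs : HasDerivAt (fun x : ℝ => Real.log (1 - x)) (-(1 - x)⁻¹) x := by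
      have h := (Real.hasDerivAt_log hs1.ne').comp x hsd
      simpa [Function.comp_def] using h
    have hd := ((((((((((((((((((((((((hasDerivAt_pow 1 x).const_mul (((-361/900) * Real.pi ^ 2))).add ((hasDerivAt_pow 2 x).const_mul (((361/600) * Real.pi ^ 2)))).add ((hasDerivAt_pow 3 x).const_mul (((-361/900) * Real.pi ^ 2)))).add ((hasDerivAt_pow 4 x).const_mul (((361/3600) * Real.pi ^ 2)))).add ((hsd.pow 3).const_mul ((38/45)))).add (((hsd.pow 3).mul hLs).const_mul ((-38/15)))).add ((hsd.pow 4).const_mul ((57/1600)))).add (((hsd.pow 4).mul hLs).const_mul ((-57/400)))).add (((hsd.pow 4).mul (hLs.pow 2)).const_mul ((-361/200)))).add ((hsd.pow 5).const_mul ((-19/75)))).add (((hsd.pow 5).mul hLs).const_mul ((19/15)))).add ((hasDerivAt_pow 1 x).const_mul ((239/45)))).add ((hasDerivAt_pow 2 x).const_mul ((-6293/900)))).add (((hasDerivAt_pow 2 x).mul hlogx).const_mul ((817/300)))).add ((hasDerivAt_pow 3 x).const_mul ((11497/2700)))).add (((hasDerivAt_pow 3 x).mul hlogx).const_mul ((-133/225)))).add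 (((hasDerivAt_pow 3 x).mul (hlogx.pow 2)).const_mul ((361/150)))).add ((hasDerivAt_pow 4 x).const_mul ((-32731/14400)))).add (((hasDerivAt_pow 4 x).mul hlogx).const_mul ((-1121/400)))).add (((hasDerivAt_pow 4 x).mul (hlogx.pow 2)).const_mul ((-361/200)))).add ((hasDerivAt_pow 5 x).const_mul ((1163/900)))).add (((hasDerivAt_pow 5 x).mul hlogx).const_mul ((19/15)))).add ((hasDerivAt_pow 6 x).const_mul ((-31/90))))
    refine hd.congr_deriv ?_
    simp only [Nat.cast_ofNat, Nat.cast_one, Pi.pow_apply]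
    field_simp
    ring
  have hm1 : (∫ x in (0:ℝ)..1, x ^ 1 * (Real.log x * Real.log (1 - x))) = 1 - Real.pi^2/12 := by
    rw [← M1]
    apply intervalIntegral.integral_congr
    intro x _
    ring
  rw [hsplit2, hFTCB, hm1, M2, M3]
  beta_reduce
  rw [show (1:ℝ) - 1 = 0 by norm_num, show (1:ℝ) - 0 = 1 by norm_num]
  rw [Real.log_zero, Real.log_one]
  ring
end

section
/- Let (D_1, D_2, D_3) be uniform spacings on the 2-simplex. Then 2·E[(D_1 + (D_1+D_2)·D_3 + (3/5)·Σ_{j=1}^3 D_j ln D_j)^2] = 7/10 − (3/50)·π^2. -/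
open Real MeasureTheory intervalIntegral Finset

section Aux

lemma contML : Continuous (fun y : ℝ => y * Real.log y) := Real.continuous_mul_log

lemma contMLc (t : ℝ) : Continuous (fun y : ℝ => (t - y) * Real.log (t - y)) :=
  contML.comp (continuous_const.sub continuous_id)

lemma reflect_unit (f : ℝ → ℝ) : ∫ x in (0:ℝ)..1, f (1-x) = ∫ x in (0:ℝ)..1, f x := by
  simpa using intervalIntegral.integral_comp_sub_left f 1

lemma reflect_t (f : ℝ → ℝ) (t : ℝ) : ∫ x in (0:ℝ)..t, f (t-x) = ∫ x in (0:ℝ)..t, f x := by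
  simpa using intervalIntegral.integral_comp_sub_left f t

/-- polynomial integral, degree ≤ 5 -/
lemma int_poly (t a0 a1 a2 a3 a4 a5 : ℝ) :
    ∫ y in (0:ℝ)..t, (a0 + a1*y + a2*y^2 + a3*y^3 + a4*y^4 + a5*y^5)
      = a0*t + a1*t^2/2 + a2*t^3/3 + a3*t^4/4 + a4*t^5/5 + a5*t^6/6 := by
  have : ∀ y : ℝ, HasDerivAt (fun y : ℝ => a0*y + a1*y^2/2 + a2*y^3/3 + a3*y^4/4 + a4*y^5/5 + a5*y^6/6)
      (a0 + a1*y + a2*y^2 + a3*y^3 + a4*y^4 + a5*y^5) y := by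
    intro y
    have h : HasDerivAt (fun y : ℝ => a0*y + a1*y^2/2 + a2*y^3/3 + a3*y^4/4 + a4*y^5/5 + a5*y^6/6)
        (a0*1 + a1*(2*y^1)/2 + a2*(3*y^2)/3 + a3*(4*y^3)/4 + a4*(5*y^4)/5 + a5*(6*y^5)/6) y := by
      exact ((((((hasDerivAt_id y).const_mul a0).add
        (((hasDerivAt_pow 2 y).const_mul a1).div_const 2)).add
        (((hasDerivAt_pow 3 y).const_mul a2).div_const 3)).add
        (((hasDerivAt_pow 4 y).const_mul a3).div_const 4)).add
        (((hasDerivAt_pow 5 y).const_mul a4).div_const 5)).add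
        (((hasDerivAt_pow 6 y).const_mul a5).div_const 6) |>.congr_deriv (by push_cast; ring)
    exact h.congr_deriv (by ring)
  rw [intervalIntegral.integral_eq_sub_of_hasDerivAt (fun y _ => this y)]
  · ring
  · apply Continuous.intervalIntegrable; continuity

lemma int_poly_mul_log (t a0 a1 a2 a3 : ℝ) (ht : 0 < t) :
    ∫ y in (0:ℝ)..t, (a0 + a1*y + a2*y^2 + a3*y^3) * (y * Real.log y)
      = a0*(t^2*Real.log t/2 - t^2/4) + a1*(t^3*Real.log t/3 - t^3/9)
        + a2*(t^4*Real.log t/4 - t^4/16) + a3*(t^5*Real.log t/5 - t^5/25) := by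
  set F : ℝ → ℝ := fun y => a0*(y^2*Real.log y/2 - y^2/4) + a1*(y^3*Real.log y/3 - y^3/9)
        + a2*(y^4*Real.log y/4 - y^4/16) + a3*(y^5*Real.log y/5 - y^5/25) with hF
  have hcont : ContinuousOn F (Set.Icc 0 t) := by
    have h : F = fun y => a0*(y*(y*Real.log y)/2 - y^2/4) + a1*(y^2*(y*Real.log y)/3 - y^3/9)
        + a2*(y^3*(y*Real.log y)/4 - y^4/16) + a3*(y^4*(y*Real.log y)/5 - y^5/25) := by
      funext y; simp only [hF]; ring
    rw [h]
    have c1 : Continuous fun y : ℝ => y*(y*Real.log y)/2 - y^2/4 :=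
      ((continuous_id.mul contML).div_const 2).sub ((continuous_pow 2).div_const 4)
    have c2 : Continuous fun y : ℝ => y^2*(y*Real.log y)/3 - y^3/9 :=
      (((continuous_pow 2).mul contML).div_const 3).sub ((continuous_pow 3).div_const 9)
    have c3 : Continuous fun y : ℝ => y^3*(y*Real.log y)/4 - y^4/16 :=
      (((continuous_pow 3).mul contML).div_const 4).sub ((continuous_pow 4).div_const 16)
    have c4 : Continuous fun y : ℝ => y^4*(y*Real.log y)/5 - y^5/25 :=
      (((continuous_pow 4).mul contML).div_const 5).sub ((continuous_pow 5).div_const 25)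
    exact ((((continuous_const.mul c1).add (continuous_const.mul c2)).add
      (continuous_const.mul c3)).add (continuous_const.mul c4)).continuousOn
  have hderiv : ∀ y ∈ Set.Ioo (0:ℝ) t, HasDerivAt F ((a0 + a1*y + a2*y^2 + a3*y^3) * (y * Real.log y)) y := by
    intro y hy
    have hy0 : y ≠ 0 := ne_of_gt hy.1
    have hlog := Real.hasDerivAt_log hy0
    have h2 : HasDerivAt (fun y : ℝ => y^2) ((2:ℕ)*y^1) y := hasDerivAt_pow 2 y
    have h3 : HasDerivAt (fun y : ℝ => y^3) ((3:ℕ)*y^2) y := hasDerivAt_pow 3 y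
    have h4 : HasDerivAt (fun y : ℝ => y^4) ((4:ℕ)*y^3) y := hasDerivAt_pow 4 y
    have h5 : HasDerivAt (fun y : ℝ => y^5) ((5:ℕ)*y^4) y := hasDerivAt_pow 5 y
    have h := (((((((h2.mul hlog).div_const 2).sub (h2.div_const 4)).const_mul a0).add
      ((((h3.mul hlog).div_const 3).sub (h3.div_const 9)).const_mul a1)).add
      ((((h4.mul hlog).div_const 4).sub (h4.div_const 16)).const_mul a2)).add
      ((((h5.mul hlog).div_const 5).sub (h5.div_const 25)).const_mul a3))
    exact h.congr_deriv (by push_cast; field_simp; ring)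
  have hint : IntervalIntegrable (fun y => (a0 + a1*y + a2*y^2 + a3*y^3) * (y * Real.log y))
      volume 0 t := by
    apply Continuous.intervalIntegrable
    exact (by continuity : Continuous fun y:ℝ => a0 + a1*y + a2*y^2 + a3*y^3).mul contML
  rw [intervalIntegral.integral_eq_sub_of_hasDerivAt_of_le ht.le hcont hderiv hint]
  simp only [hF]; rw [Real.log_zero]; ring

lemma int_lin_sq_log (t b0 b1 : ℝ) (ht : 0 < t) :
    ∫ y in (0:ℝ)..t, (b0 + b1*y) * (y * Real.log y)^2
      = b0*(t^3*(Real.log t)^2/3 - 2*t^3*Real.log t/9 + 2*t^3/27)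
        + b1*(t^4*(Real.log t)^2/4 - t^4*Real.log t/8 + t^4/32) := by
  set F : ℝ → ℝ := fun y => b0*(y^3*(Real.log y)^2/3 - 2*(y^3*Real.log y)/9 + 2*y^3/27)
        + b1*(y^4*(Real.log y)^2/4 - y^4*Real.log y/8 + y^4/32) with hF
  have hcont : ContinuousOn F (Set.Icc 0 t) := by
    have h : F = fun y => b0*(y*(y*Real.log y)^2/3 - 2*(y^2*(y*Real.log y))/9 + 2*y^3/27)
        + b1*(y^2*(y*Real.log y)^2/4 - y^3*(y*Real.log y)/8 + y^4/32) := by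
      funext y; simp only [hF]; ring
    rw [h]
    have c1 : Continuous fun y : ℝ => y*(y*Real.log y)^2/3 - 2*(y^2*(y*Real.log y))/9 + 2*y^3/27 :=
      (((continuous_id.mul (contML.pow 2)).div_const 3).sub
        ((continuous_const.mul ((continuous_pow 2).mul contML)).div_const 9)).add
        ((continuous_const.mul (continuous_pow 3)).div_const 27)
    have c2 : Continuous fun y : ℝ => y^2*(y*Real.log y)^2/4 - y^3*(y*Real.log y)/8 + y^4/32 :=
      ((((continuous_pow 2).mul (contML.pow 2)).div_const 4).sub
        (((continuous_pow 3).mul contML).div_const 8)).add ((continuous_pow 4).div_const 32)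
    exact ((continuous_const.mul c1).add (continuous_const.mul c2)).continuousOn
  have hderiv : ∀ y ∈ Set.Ioo (0:ℝ) t, HasDerivAt F ((b0 + b1*y) * (y * Real.log y)^2) y := by
    intro y hy
    have hy0 : y ≠ 0 := ne_of_gt hy.1
    have hlog := Real.hasDerivAt_log hy0
    have hlog2 : HasDerivAt (fun y : ℝ => (Real.log y)^2) (2*Real.log y*(1/y)) y :=
      ((hasDerivAt_pow 2 (Real.log y)).comp y hlog).congr_deriv (by push_cast; ring)
    have h3 : HasDerivAt (fun y : ℝ => y^3) ((3:ℕ)*y^2) y := hasDerivAt_pow 3 y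
    have h4 : HasDerivAt (fun y : ℝ => y^4) ((4:ℕ)*y^3) y := hasDerivAt_pow 4 y
    have h := ((((h3.mul hlog2).div_const 3).sub (((h3.mul hlog).const_mul 2).div_const 9)).add
        ((h3.const_mul 2).div_const 27)).const_mul b0 |>.add
      (((((h4.mul hlog2).div_const 4).sub ((h4.mul hlog).div_const 8)).add
        (h4.div_const 32)).const_mul b1)
    exact h.congr_deriv (by push_cast; field_simp; ring)
  have hint : IntervalIntegrable (fun y => (b0 + b1*y) * (y * Real.log y)^2) volume 0 t := by
    apply Continuous.intervalIntegrable
    exact (by continuity : Continuous fun y:ℝ => b0 + b1*y).mul (contML.pow 2)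
  rw [intervalIntegral.integral_eq_sub_of_hasDerivAt_of_le ht.le hcont hderiv hint]
  simp only [hF]; rw [Real.log_zero]; ring

lemma int_pow_log (n : ℕ) : ∫ x in (0:ℝ)..1, x^(n+1) * Real.log x = -(1/((n:ℝ)+2)^2) := by
  set F : ℝ → ℝ := fun y => y^(n+2)*Real.log y/((n:ℝ)+2) - y^(n+2)/((n:ℝ)+2)^2 with hF
  have hn2 : ((n:ℝ)+2) ≠ 0 := by positivity
  have hcont : ContinuousOn F (Set.Icc 0 1) := by
    have h : F = fun y => y^(n+1)*(y*Real.log y)/((n:ℝ)+2) - y^(n+2)/((n:ℝ)+2)^2 := by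
      funext y; simp only [hF]; ring
    rw [h]
    exact ((((continuous_pow (n+1)).mul contML).div_const _).sub
      ((continuous_pow (n+2)).div_const _)).continuousOn
  have hderiv : ∀ y ∈ Set.Ioo (0:ℝ) 1, HasDerivAt F (y^(n+1) * Real.log y) y := by
    intro y hy
    have hy0 : y ≠ 0 := ne_of_gt hy.1
    have hp : HasDerivAt (fun y : ℝ => y^(n+2)) (((n:ℝ)+2)*y^(n+1)) y := by
      have := hasDerivAt_pow (n+2) y
      simpa [Nat.cast_add] using this
    have h := ((hp.mul (Real.hasDerivAt_log hy0)).div_const ((n:ℝ)+2)).sub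
      (hp.div_const (((n:ℝ)+2)^2))
    refine h.congr_deriv ?_
    field_simp
    ring
  have hint : IntervalIntegrable (fun y => y^(n+1) * Real.log y) volume 0 1 := by
    apply Continuous.intervalIntegrable
    have h : (fun y : ℝ => y^(n+1) * Real.log y) = fun y => y^n * (y * Real.log y) := by
      funext y; ring
    rw [h]; exact (continuous_pow n).mul contML
  rw [intervalIntegral.integral_eq_sub_of_hasDerivAt_of_le zero_le_one hcont hderiv hint]
  simp only [hF]
  rw [Real.log_one, Real.log_zero]
  norm_num

lemma hasSum_inv_sq_shift (d : ℕ) :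
    HasSum (fun k : ℕ => 1/(((k:ℝ)+d+1)^2))
      (π^2/6 - ∑ i ∈ Finset.range d, 1/(((i:ℝ)+1)^2)) := by
  have h0 : HasSum (fun n : ℕ => (1:ℝ)/(n:ℝ)^2) (π^2/6) := hasSum_zeta_two
  have h1 : HasSum (fun n : ℕ => (1:ℝ)/((n + (d+1) : ℕ):ℝ)^2)
      (π^2/6 - ∑ i ∈ Finset.range (d+1), (1:ℝ)/(i:ℝ)^2) :=
    ((hasSum_nat_add_iff' (d+1)).2 (by simpa using h0))
  have hfun : (fun n : ℕ => (1:ℝ)/((n + (d+1) : ℕ):ℝ)^2) = fun k : ℕ => 1/(((k:ℝ)+d+1)^2) := by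
    funext k; push_cast; ring_nf
  have hval : ∑ i ∈ Finset.range (d+1), (1:ℝ)/(i:ℝ)^2
      = ∑ i ∈ Finset.range d, 1/(((i:ℝ)+1)^2) := by
    rw [Finset.sum_range_succ']
    push_cast
    norm_num
  rw [hfun, hval] at h1
  exact h1

lemma hasSum_telescope_inv (d : ℕ) :
    HasSum (fun k : ℕ => 1/((k:ℝ)+1) - 1/((k:ℝ)+d+1))
      (∑ i ∈ Finset.range d, 1/((i:ℝ)+1)) := by
  have hnn : ∀ k : ℕ, 0 ≤ 1/((k:ℝ)+1) - 1/((k:ℝ)+d+1) := by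
    intro k
    have h1 : (0:ℝ) < (k:ℝ)+1 := by positivity
    have h2 : ((k:ℝ)+1) ≤ (k:ℝ)+d+1 := by
      have : (0:ℝ) ≤ (d:ℝ) := Nat.cast_nonneg d
      linarith
    have := one_div_le_one_div_of_le h1 h2
    linarith
  rw [hasSum_iff_tendsto_nat_of_nonneg hnn]
  set f : ℕ → ℝ := fun k => 1/((k:ℝ)+1) with hf
  have key : ∀ n : ℕ, ∑ k ∈ Finset.range n, (1/((k:ℝ)+1) - 1/((k:ℝ)+d+1))
      = ∑ i ∈ Finset.range d, f i - ∑ i ∈ Finset.range d, f (n+i) := by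
    intro n
    have e1 : ∑ k ∈ Finset.range n, (1/((k:ℝ)+1) - 1/((k:ℝ)+d+1))
        = ∑ k ∈ Finset.range n, f k - ∑ k ∈ Finset.range n, f (d+k) := by
      rw [← Finset.sum_sub_distrib]
      apply Finset.sum_congr rfl
      intro k _
      simp only [hf]
      push_cast
      ring_nf
    have e2 : ∑ i ∈ Finset.range (d+n), f i = ∑ i ∈ Finset.range d, f i
        + ∑ k ∈ Finset.range n, f (d+k) := Finset.sum_range_add f d n
    have e3 : ∑ i ∈ Finset.range (n+d), f i = ∑ i ∈ Finset.range n, f i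
        + ∑ i ∈ Finset.range d, f (n+i) := Finset.sum_range_add f n d
    rw [e1]
    have e4 : ∑ i ∈ Finset.range (d+n), f i = ∑ i ∈ Finset.range (n+d), f i := by
      rw [Nat.add_comm]
    linarith [e2, e3, e4]
  have htail : Filter.Tendsto (fun n : ℕ => ∑ i ∈ Finset.range d, f (n+i))
      Filter.atTop (nhds 0) := by
    have : Filter.Tendsto (fun n : ℕ => ∑ i ∈ Finset.range d, f (n+i))
        Filter.atTop (nhds (∑ i ∈ Finset.range d, (0:ℝ))) := by
      apply tendsto_finset_sum
      intro i _
      simp only [hf]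
      have : Filter.Tendsto (fun n : ℕ => ((n+i : ℕ):ℝ)+1) Filter.atTop Filter.atTop := by
        apply Filter.tendsto_atTop_add_const_right
        exact_mod_cast (tendsto_natCast_atTop_atTop (R := ℝ)).comp
          (Filter.tendsto_add_atTop_nat i)
      simpa [one_div, Pi.inv_def] using this.inv_tendsto_atTop
    simpa using this
  have : Filter.Tendsto (fun n : ℕ => ∑ i ∈ Finset.range d, f i - ∑ i ∈ Finset.range d, f (n+i))
      Filter.atTop (nhds (∑ i ∈ Finset.range d, f i - 0)) :=
    tendsto_const_nhds.sub htail
  rw [sub_zero] at this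
  exact this.congr (fun n => (key n).symm)

lemma hasSum_K (d : ℕ) (hd : 0 < d) :
    HasSum (fun k : ℕ => 1/(((k:ℝ)+1)*((k:ℝ)+d+1)^2))
      ((∑ i ∈ Finset.range d, 1/((i:ℝ)+1))/(d:ℝ)^2
        + (∑ i ∈ Finset.range d, 1/(((i:ℝ)+1)^2))/(d:ℝ) - π^2/(6*(d:ℝ))) := by
  have h := ((hasSum_telescope_inv d).div_const ((d:ℝ)^2)).sub
    ((hasSum_inv_sq_shift d).div_const (d:ℝ))
  have hfun : (fun k : ℕ => (1/((k:ℝ)+1) - 1/((k:ℝ)+d+1))/(d:ℝ)^2 - (1/(((k:ℝ)+d+1)^2))/(d:ℝ))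
      = fun k : ℕ => 1/(((k:ℝ)+1)*((k:ℝ)+d+1)^2) := by
    funext k
    have h1 : ((k:ℝ)+1) ≠ 0 := by positivity
    have h2 : ((k:ℝ)+d+1) ≠ 0 := by positivity
    field_simp
    ring
  rw [hfun] at h
  convert h using 1
  · rfl
  ring

/-- value for the unit cross constant: coefficients (1, -1, 0) -/
lemma tsum_cross : (∑' k : ℕ, ((1:ℝ)/((k:ℝ)+3)^2 + (-1)/((k:ℝ)+4)^2 + 0/((k:ℝ)+5)^2)/((k:ℝ)+1))
    = 37/108 - π^2/36 := by
  have h2 := hasSum_K 2 (by norm_num)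
  have h3 := hasSum_K 3 (by norm_num)
  have h := h2.sub h3
  have hfun : (fun k : ℕ => 1/(((k:ℝ)+1)*((k:ℝ)+2+1)^2) - 1/(((k:ℝ)+1)*((k:ℝ)+3+1)^2))
      = fun k : ℕ => ((1:ℝ)/((k:ℝ)+3)^2 + (-1)/((k:ℝ)+4)^2 + 0/((k:ℝ)+5)^2)/((k:ℝ)+1) := by
    funext k
    have h1 : ((k:ℝ)+1) ≠ 0 := by positivity
    have ha : ((k:ℝ)+3) ≠ 0 := by positivity
    have hb : ((k:ℝ)+4) ≠ 0 := by positivity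
    push_cast
    field_simp
    ring
  push_cast at h
  rw [hfun] at h
  rw [h.tsum_eq]
  norm_num [Finset.sum_range_succ]
  ring

/-- value for the outer K-group: coefficients (1, -2, 1) -/
lemma tsum_outer : (∑' k : ℕ, ((1:ℝ)/((k:ℝ)+3)^2 + (-2)/((k:ℝ)+4)^2 + 1/((k:ℝ)+5)^2)/((k:ℝ)+1))
    = 37/216 - π^2/72 := by
  have h2 := hasSum_K 2 (by norm_num)
  have h3 := hasSum_K 3 (by norm_num)
  have h4 := hasSum_K 4 (by norm_num)
  have h := (h2.sub (h3.add h3)).add h4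
  have hfun : (fun k : ℕ => (1/(((k:ℝ)+1)*((k:ℝ)+2+1)^2)
        - (1/(((k:ℝ)+1)*((k:ℝ)+3+1)^2) + 1/(((k:ℝ)+1)*((k:ℝ)+3+1)^2)))
        + 1/(((k:ℝ)+1)*((k:ℝ)+4+1)^2))
      = fun k : ℕ => ((1:ℝ)/((k:ℝ)+3)^2 + (-2)/((k:ℝ)+4)^2 + 1/((k:ℝ)+5)^2)/((k:ℝ)+1) := by
    funext k
    have h1 : ((k:ℝ)+1) ≠ 0 := by positivity
    have ha : ((k:ℝ)+3) ≠ 0 := by positivity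
    have hb : ((k:ℝ)+4) ≠ 0 := by positivity
    have hc : ((k:ℝ)+5) ≠ 0 := by positivity
    push_cast
    field_simp
    ring
  push_cast at h
  rw [hfun] at h
  rw [h.tsum_eq]
  norm_num [Finset.sum_range_succ]
  ring

lemma K_poly_integral (a1 a2 a3 : ℝ) :
    ∫ x in (0:ℝ)..1, (a1*x + a2*x^2 + a3*x^3) * Real.log x * Real.log (1-x)
    = ∑' k : ℕ, (a1/((k:ℝ)+3)^2 + a2/((k:ℝ)+4)^2 + a3/((k:ℝ)+5)^2)/((k:ℝ)+1) := by
  set S := |a1| + |a2| + |a3| with hS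
  set F : ℕ → ℝ → ℝ := fun k x =>
    (a1*x^(k+1) + a2*x^(k+2) + a3*x^(k+3)) * (x*Real.log x) / (-((k:ℝ)+1)) with hF
  have hcF : ∀ k, Continuous (F k) := by
    intro k
    apply Continuous.div_const
    exact (((continuous_const.mul (continuous_pow (k+1))).add
      (continuous_const.mul (continuous_pow (k+2)))).add
      (continuous_const.mul (continuous_pow (k+3)))).mul contML
  have hval : ∀ k : ℕ, ∫ x in (0:ℝ)..1, F k x
      = (a1/((k:ℝ)+3)^2 + a2/((k:ℝ)+4)^2 + a3/((k:ℝ)+5)^2)/((k:ℝ)+1) := by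
    intro k
    have hco : ∀ (m : ℕ) (c : ℝ), IntervalIntegrable (fun x => c * (x^(m+1) * Real.log x)) volume 0 1 := by
      intro m c
      apply Continuous.intervalIntegrable
      have h : (fun x : ℝ => c * (x^(m+1) * Real.log x)) = fun x => c * (x^m * (x * Real.log x)) := by
        funext x; ring
      rw [h]
      exact continuous_const.mul ((continuous_pow m).mul contML)
    have h1 : (fun x : ℝ => F k x) = fun x =>
        (-a1/((k:ℝ)+1)) * (x^(k+1+1) * Real.log x)
        + ((-a2/((k:ℝ)+1)) * (x^(k+2+1) * Real.log x)
        + (-a3/((k:ℝ)+1)) * (x^(k+3+1) * Real.log x)) := by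
      funext x; simp only [hF]
      have hk : (-((k:ℝ)+1)) ≠ 0 := by
        have : (0:ℝ) < (k:ℝ)+1 := by positivity
        exact neg_ne_zero.2 (ne_of_gt this)
      simp only [div_neg, neg_div]
      have h1' : ((k:ℝ)+1) ≠ 0 := by positivity
      field_simp
      ring
    rw [h1, intervalIntegral.integral_add (hco _ _) ((hco _ _).add (hco _ _)),
      intervalIntegral.integral_add (hco _ _) (hco _ _),
      intervalIntegral.integral_const_mul, intervalIntegral.integral_const_mul,
      intervalIntegral.integral_const_mul, int_pow_log, int_pow_log, int_pow_log]
    push_cast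
    have h1' : ((k:ℝ)+1) ≠ 0 := by positivity
    have ha : ((k:ℝ)+1+2) ≠ 0 := by positivity
    have hb : ((k:ℝ)+2+2) ≠ 0 := by positivity
    have hc : ((k:ℝ)+3+2) ≠ 0 := by positivity
    have ha' : ((k:ℝ)+3) ≠ 0 := by positivity
    have hb' : ((k:ℝ)+4) ≠ 0 := by positivity
    have hc' : ((k:ℝ)+5) ≠ 0 := by positivity
    field_simp
    ring
  have hEq : Set.EqOn (fun x => (a1*x + a2*x^2 + a3*x^3) * Real.log x * Real.log (1-x))
      (fun x => ∑' k : ℕ, F k x) (Set.Ioc (0:ℝ) 1) := by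
    intro x hx
    rcases eq_or_lt_of_le hx.2 with h1 | h1
    · subst h1
      simp [hF, Real.log_one]
    · have habs : |x| < 1 := abs_lt.2 ⟨by linarith [hx.1], h1⟩
      have hs := Real.hasSum_pow_div_log_of_abs_lt_one habs
      have hs2 := hs.mul_left (-((a1*x + a2*x^2 + a3*x^3) * Real.log x))
      have hfun : (fun n : ℕ => -((a1*x + a2*x^2 + a3*x^3) * Real.log x) * (x^(n+1)/((n:ℝ)+1)))
          = fun n : ℕ => F n x := by
        funext n
        simp only [hF]
        rw [← mul_div_assoc, div_eq_div_iff (by positivity) (by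
          have : (0:ℝ) < (n:ℝ)+1 := by positivity
          exact neg_ne_zero.2 (ne_of_gt this))]
        ring
      rw [hfun] at hs2
      have h3 := hs2.tsum_eq
      simp only []
      rw [h3]
      ring
  have hle : ∀ k : ℕ, (∫ x in Set.Ioc (0:ℝ) 1, ‖F k x‖) ≤ S/((k:ℝ)+1)^2 := by
    intro k
    have hk1 : (0:ℝ) < (k:ℝ)+1 := by positivity
    have hG : Continuous (fun x : ℝ => (S/((k:ℝ)+1)) * (x^k * ((-(x*Real.log x))) * x)) :=
      continuous_const.mul (((continuous_pow k).mul contML.neg).mul continuous_id')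
    have key : ∫ x in Set.Ioc (0:ℝ) 1, ‖F k x‖
        ≤ ∫ x in Set.Ioc (0:ℝ) 1, (S/((k:ℝ)+1)) * (x^k * ((-(x*Real.log x))) * x) := by
      apply setIntegral_mono_on ((hcF k).norm.integrableOn_Ioc) (hG.integrableOn_Ioc)
        measurableSet_Ioc
      intro x hx
      have hx0 : 0 < x := hx.1
      have hx1 : x ≤ 1 := hx.2
      have hlog : Real.log x ≤ 0 := Real.log_nonpos hx0.le hx1
      simp only [hF, norm_eq_abs]
      rw [abs_div, abs_mul]
      have hk1' : |(-((k:ℝ)+1))| = (k:ℝ)+1 := by rw [abs_neg]; exact abs_of_pos hk1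
      rw [hk1']
      have hxlog : |x * Real.log x| = x * (-Real.log x) := by
        rw [abs_mul, abs_of_pos hx0, abs_of_nonpos hlog]
      rw [hxlog]
      have hpoly : |a1*x^(k+1) + a2*x^(k+2) + a3*x^(k+3)| ≤ S * x^(k+1) := by
        have b1 : |a1*x^(k+1)| = |a1| * x^(k+1) := by
          rw [abs_mul, abs_of_nonneg (pow_nonneg hx0.le _)]
        have b2 : |a2*x^(k+2)| ≤ |a2| * x^(k+1) := by
          rw [abs_mul, abs_of_nonneg (pow_nonneg hx0.le _)]
          exact mul_le_mul_of_nonneg_left (pow_le_pow_of_le_one hx0.le hx1 (by omega)) (abs_nonneg _)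
        have b3 : |a3*x^(k+3)| ≤ |a3| * x^(k+1) := by
          rw [abs_mul, abs_of_nonneg (pow_nonneg hx0.le _)]
          exact mul_le_mul_of_nonneg_left (pow_le_pow_of_le_one hx0.le hx1 (by omega)) (abs_nonneg _)
        calc |a1*x^(k+1) + a2*x^(k+2) + a3*x^(k+3)|
            ≤ |a1*x^(k+1)| + |a2*x^(k+2)| + |a3*x^(k+3)| := abs_add_three _ _ _
          _ ≤ |a1| * x^(k+1) + |a2| * x^(k+1) + |a3| * x^(k+1) := by rw [b1]; gcongr
          _ = S * x^(k+1) := by rw [hS]; ring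
      have hnn : 0 ≤ x * (-Real.log x) := mul_nonneg hx0.le (neg_nonneg.2 hlog)
      have hmul := mul_le_mul_of_nonneg_right hpoly hnn
      calc |a1*x^(k+1) + a2*x^(k+2) + a3*x^(k+3)| * (x * (-Real.log x)) / ((k:ℝ)+1)
          ≤ (S * x^(k+1)) * (x * (-Real.log x)) / ((k:ℝ)+1) := (div_le_div_iff_of_pos_right hk1).2 hmul
        _ = (S/((k:ℝ)+1)) * (x^k * ((-(x*Real.log x))) * x) := by ring
    refine key.trans ?_
    rw [← intervalIntegral.integral_of_le zero_le_one, intervalIntegral.integral_const_mul]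
    have hI : ∫ x in (0:ℝ)..1, x^k * ((-(x*Real.log x))) * x = 1/((k:ℝ)+3)^2 := by
      have h2 : (fun x : ℝ => x^k * ((-(x*Real.log x))) * x) = fun x => -(x^(k+1+1) * Real.log x) := by
        funext x; ring
      rw [h2, intervalIntegral.integral_neg, int_pow_log]
      push_cast; ring
    rw [hI, div_mul_div_comm, mul_one]
    have hSnn : 0 ≤ S := by positivity
    have hk3 : ((k:ℝ)+1)^2 ≤ ((k:ℝ)+1)*((k:ℝ)+3)^2 := by nlinarith [Nat.cast_nonneg (α := ℝ) k]
    gcongr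
  have hsum : Summable fun k : ℕ => ∫ x in Set.Ioc (0:ℝ) 1, ‖F k x‖ := by
    have base : Summable (fun k : ℕ => 1/((k:ℝ)+1)^2) := by
      have h2 : Summable (fun n : ℕ => 1/(n:ℝ)^2) := by
        rw [Real.summable_one_div_nat_pow]; norm_num
      have h3 := (summable_nat_add_iff 1).2 h2
      apply h3.congr
      intro k; push_cast; ring
    have hSb : Summable (fun k : ℕ => S/((k:ℝ)+1)^2) := by
      have := base.mul_left S
      apply this.congr
      intro k; rw [← div_eq_mul_one_div]
    exact Summable.of_nonneg_of_le (fun k => integral_nonneg (fun x => norm_nonneg _)) hle hSb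
  have hint : ∀ k : ℕ, Integrable (F k) (volume.restrict (Set.Ioc (0:ℝ) 1)) :=
    fun k => (hcF k).integrableOn_Ioc
  rw [intervalIntegral.integral_of_le zero_le_one]
  rw [setIntegral_congr_fun measurableSet_Ioc hEq]
  rw [← MeasureTheory.integral_tsum_of_summable_integral_norm hint hsum]
  apply tsum_congr
  intro k
  rw [← intervalIntegral.integral_of_le zero_le_one]
  exact hval k

/-- the unit cross constant -/
lemma unit_cross : ∫ u in (0:ℝ)..1, (u*Real.log u) * ((1-u)*Real.log (1-u))
    = 37/108 - π^2/36 := by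
  have h : (fun u : ℝ => (u*Real.log u) * ((1-u)*Real.log (1-u)))
      = fun u => ((1:ℝ)*u + (-1)*u^2 + 0*u^3) * Real.log u * Real.log (1-u) := by
    funext u; ring
  rw [h, K_poly_integral, tsum_cross]

lemma int_cross (t : ℝ) (ht : 0 < t) :
    ∫ y in (0:ℝ)..t, (y*Real.log y) * ((t-y)*Real.log (t-y))
      = t^3*((Real.log t)^2/6 - 5*Real.log t/18 + 37/108 - π^2/36) := by
  have hsub := intervalIntegral.smul_integral_comp_mul_left
    (fun y => (y*Real.log y) * ((t-y)*Real.log (t-y))) t (a := 0) (b := 1)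
  simp only [mul_zero, mul_one, smul_eq_mul] at hsub
  rw [← hsub]
  have hEq : Set.EqOn (fun u : ℝ => (t*u*Real.log (t*u)) * ((t-t*u)*Real.log (t-t*u)))
      (fun u : ℝ => t^2*((Real.log t)^2 * (u + (-1)*u^2 + 0*u^3 + 0*u^4 + 0*u^5)
        + Real.log t * ((1 + (-1)*u + 0*u^2 + 0*u^3) * (u*Real.log u))
        + Real.log t * ((1 + (-1)*(1-u) + 0*(1-u)^2 + 0*(1-u)^3) * ((1-u)*Real.log (1-u)))
        + (u*Real.log u) * ((1-u)*Real.log (1-u))))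
      (Set.uIcc (0:ℝ) 1) := by
    intro u hu
    rw [Set.uIcc_of_le zero_le_one] at hu
    rcases eq_or_lt_of_le hu.1 with h0 | h0
    · simp only [← h0]
      simp
    · rcases eq_or_lt_of_le hu.2 with h1 | h1
      · subst h1
        simp
      · have hlt : Real.log (t*u) = Real.log t + Real.log u :=
          Real.log_mul (ne_of_gt ht) (ne_of_gt h0)
        have hlt2 : Real.log (t-t*u) = Real.log t + Real.log (1-u) := by
          rw [show t - t*u = t*(1-u) by ring]
          exact Real.log_mul (ne_of_gt ht) (by linarith)
        simp only [hlt, hlt2]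
        ring
  rw [intervalIntegral.integral_congr hEq]
  have c1 : Continuous fun u : ℝ => (Real.log t)^2 * (u + (-1)*u^2 + 0*u^3 + 0*u^4 + 0*u^5) := by
    continuity
  have c2 : Continuous fun u : ℝ => Real.log t * ((1 + (-1)*u + 0*u^2 + 0*u^3) * (u*Real.log u)) :=
    continuous_const.mul ((by continuity : Continuous fun u : ℝ => 1 + (-1)*u + 0*u^2 + 0*u^3).mul contML)
  have c3 : Continuous fun u : ℝ =>
      Real.log t * ((1 + (-1)*(1-u) + 0*(1-u)^2 + 0*(1-u)^3) * ((1-u)*Real.log (1-u))) :=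
    continuous_const.mul ((by continuity : Continuous fun u : ℝ => 1 + (-1)*(1-u) + 0*(1-u)^2 + 0*(1-u)^3).mul (contMLc 1))
  have c4 : Continuous fun u : ℝ => (u*Real.log u) * ((1-u)*Real.log (1-u)) :=
    contML.mul (contMLc 1)
  rw [intervalIntegral.integral_const_mul,
    intervalIntegral.integral_add ((c1.fun_add c2).fun_add c3 |>.intervalIntegrable _ _) (c4.intervalIntegrable _ _),
    intervalIntegral.integral_add ((c1.fun_add c2).intervalIntegrable _ _) (c3.intervalIntegrable _ _),
    intervalIntegral.integral_add (c1.intervalIntegrable _ _) (c2.intervalIntegrable _ _)]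
  rw [intervalIntegral.integral_const_mul, intervalIntegral.integral_const_mul,
    intervalIntegral.integral_const_mul]
  have e1 : ∫ u in (0:ℝ)..1, (u + (-1)*u^2 + 0*u^3 + 0*u^4 + 0*u^5) = 1/6 := by
    have := int_poly 1 0 1 (-1) 0 0 0
    rw [show (fun u : ℝ => u + (-1)*u^2 + 0*u^3 + 0*u^4 + 0*u^5)
      = fun u : ℝ => 0 + 1*u + (-1)*u^2 + 0*u^3 + 0*u^4 + 0*u^5 from funext fun u => by ring, this]
    norm_num
  have e2 : ∫ u in (0:ℝ)..1, (1 + (-1)*u + 0*u^2 + 0*u^3) * (u*Real.log u) = -(5/36) := by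
    rw [int_poly_mul_log 1 1 (-1) 0 0 one_pos, Real.log_one]
    norm_num
  have e3 : ∫ u in (0:ℝ)..1, (1 + (-1)*(1-u) + 0*(1-u)^2 + 0*(1-u)^3) * ((1-u)*Real.log (1-u))
      = -(5/36) := by
    rw [reflect_unit (fun v => (1 + (-1)*v + 0*v^2 + 0*v^3) * (v*Real.log v))]
    rw [int_poly_mul_log 1 1 (-1) 0 0 one_pos, Real.log_one]
    norm_num
  rw [e1, e2, e3, unit_cross]
  ring

lemma int_poly_mul_log_reflect (t a0 a1 a2 a3 : ℝ) (ht : 0 < t) :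
    ∫ y in (0:ℝ)..t, (a0 + a1*(t-y) + a2*(t-y)^2 + a3*(t-y)^3) * ((t-y) * Real.log (t-y))
      = a0*(t^2*Real.log t/2 - t^2/4) + a1*(t^3*Real.log t/3 - t^3/9)
        + a2*(t^4*Real.log t/4 - t^4/16) + a3*(t^5*Real.log t/5 - t^5/25) :=
  (reflect_t (fun w => (a0 + a1*w + a2*w^2 + a3*w^3) * (w * Real.log w)) t).trans
    (int_poly_mul_log t a0 a1 a2 a3 ht)

lemma int_lin_sq_log_reflect (t b0 b1 : ℝ) (ht : 0 < t) :
    ∫ y in (0:ℝ)..t, (b0 + b1*(t-y)) * ((t-y) * Real.log (t-y))^2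
      = b0*(t^3*(Real.log t)^2/3 - 2*t^3*Real.log t/9 + 2*t^3/27)
        + b1*(t^4*(Real.log t)^2/4 - t^4*Real.log t/8 + t^4/32) :=
  (reflect_t (fun w => (b0 + b1*w) * (w * Real.log w)^2) t).trans (int_lin_sq_log t b0 b1 ht)

set_option maxHeartbeats 1000000 in
lemma inner_eval (x : ℝ) (hx0 : 0 < x) (hx1 : x < 1) :
    (∫ y in (0:ℝ)..(1 - x),
        2 * (x + (x + y) * (1 - x - y) +
            (3 / 5) * (x * Real.log x + y * Real.log y
              + (1 - x - y) * Real.log (1 - x - y))) ^ 2)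
    = ((13/30 - 2*x + (33/5)*x^2 - (22/3)*x^3 + (27/10)*x^4 - (2/5)*x^5) - π^2/25*(1-x)^3
      + (-(8/25) + (96/25)*x - (108/25)*x^2 + (4/5)*x^3)*(x*Real.log x)
      + (18/25 - (18/25)*x)*(x*Real.log x)^2
      + ((12/5)*(1-x) - (48/25)*(1-x)^2 - (4/5)*(1-x)^3)*((1-x)*Real.log (1-x))
      + (18/25)*(1-x)*((1-x)*Real.log (1-x))^2
      + (36/25)*((x*Real.log x)*((1-x)*Real.log (1-x))*(1-x))) := by
  have ht : (0:ℝ) < 1 - x := by linarith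
  set lx := Real.log x with hlx
  -- the six groups
  set q0 : ℝ := 8*x^2 + (24/5)*x^2*lx + (18/25)*x^2*lx^2 - 8*x^3 - (12/5)*x^3*lx + 2*x^4 with hq0
  set q1 : ℝ := 8*x + (12/5)*x*lx - 20*x^2 - (24/5)*x^2*lx + 8*x^3 with hq1
  set q2 : ℝ := 2 - 16*x - (12/5)*x*lx + 12*x^2 with hq2
  set q3 : ℝ := -4 + 8*x with hq3
  set a0 : ℝ := (24/5)*x + (36/25)*x*lx - (12/5)*x^2 with ha0
  set a1 : ℝ := 12/5 - (24/5)*x with ha1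
  set b0 : ℝ := (12/5)*x + (36/25)*x*lx with hb0
  have hsplit : Set.EqOn (fun y : ℝ =>
      2 * (x + (x + y) * (1 - x - y) +
            (3 / 5) * (x * Real.log x + y * Real.log y
              + (1 - x - y) * Real.log (1 - x - y))) ^ 2)
      (fun y : ℝ =>
        (q0 + q1*y + q2*y^2 + q3*y^3 + 2*y^4 + 0*y^5)
        + (a0 + a1*y + (-(12/5))*y^2 + 0*y^3) * (y*Real.log y)
        + (b0 + (12/5)*((1-x)-y) + (-(12/5))*((1-x)-y)^2 + 0*((1-x)-y)^3)
            * (((1-x)-y) * Real.log ((1-x)-y))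
        + (18/25 + 0*y) * (y*Real.log y)^2
        + (18/25 + 0*((1-x)-y)) * (((1-x)-y) * Real.log ((1-x)-y))^2
        + (36/25) * ((y*Real.log y) * (((1-x)-y)*Real.log ((1-x)-y))))
      (Set.uIcc 0 (1-x)) := by
    intro y _
    simp only [hq0, hq1, hq2, hq3, ha0, ha1, hb0, hlx]
    have h1xy : (1:ℝ) - x - y = (1-x) - y := by ring
    ring
  rw [intervalIntegral.integral_congr hsplit]
  have c1 : Continuous fun y : ℝ => q0 + q1*y + q2*y^2 + q3*y^3 + 2*y^4 + 0*y^5 := by fun_prop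
  have c2 : Continuous fun y : ℝ => (a0 + a1*y + (-(12/5))*y^2 + 0*y^3) * (y*Real.log y) :=
    (by fun_prop : Continuous fun y : ℝ => a0 + a1*y + (-(12/5))*y^2 + 0*y^3).mul contML
  have c3 : Continuous fun y : ℝ => (b0 + (12/5)*((1-x)-y) + (-(12/5))*((1-x)-y)^2 + 0*((1-x)-y)^3)
      * (((1-x)-y) * Real.log ((1-x)-y)) :=
    (by fun_prop : Continuous fun y : ℝ =>
      b0 + (12/5)*((1-x)-y) + (-(12/5))*((1-x)-y)^2 + 0*((1-x)-y)^3).mul (contMLc (1-x))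
  have c4 : Continuous fun y : ℝ => (18/25 + 0*y) * (y*Real.log y)^2 :=
    (by fun_prop : Continuous fun y : ℝ => 18/25 + 0*y).mul (contML.pow 2)
  have c5 : Continuous fun y : ℝ => (18/25 + 0*((1-x)-y)) * (((1-x)-y) * Real.log ((1-x)-y))^2 :=
    (by fun_prop : Continuous fun y : ℝ => 18/25 + 0*((1-x)-y)).mul ((contMLc (1-x)).pow 2)
  have c6 : Continuous fun y : ℝ => (36/25) * ((y*Real.log y) * (((1-x)-y)*Real.log ((1-x)-y))) :=
    continuous_const.mul (contML.mul (contMLc (1-x)))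
  rw [intervalIntegral.integral_add ((((((c1.fun_add c2).fun_add c3).fun_add c4).fun_add c5).intervalIntegrable) _ _)
      (c6.intervalIntegrable _ _),
    intervalIntegral.integral_add (((((c1.fun_add c2).fun_add c3).fun_add c4).intervalIntegrable) _ _)
      (c5.intervalIntegrable _ _),
    intervalIntegral.integral_add ((((c1.fun_add c2).fun_add c3).intervalIntegrable) _ _)
      (c4.intervalIntegrable _ _),
    intervalIntegral.integral_add (((c1.fun_add c2).intervalIntegrable) _ _)
      (c3.intervalIntegrable _ _),
    intervalIntegral.integral_add ((c1.intervalIntegrable) _ _)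
      (c2.intervalIntegrable _ _)]
  rw [show (fun y : ℝ => q0 + q1*y + q2*y^2 + q3*y^3 + 2*y^4 + 0*y^5)
      = fun y : ℝ => q0 + q1*y + q2*y^2 + q3*y^3 + 2*y^4 + 0*y^5 from rfl,
    int_poly (1-x) q0 q1 q2 q3 2 0,
    int_poly_mul_log (1-x) a0 a1 (-(12/5)) 0 ht,
    int_poly_mul_log_reflect (1-x) b0 (12/5) (-(12/5)) 0 ht,
    int_lin_sq_log (1-x) (18/25) 0 ht,
    int_lin_sq_log_reflect (1-x) (18/25) 0 ht,
    intervalIntegral.integral_const_mul,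
    int_cross (1-x) ht]
  simp only [hq0, hq1, hq2, hq3, ha0, ha1, hb0, hlx]
  ring

end Aux

set_option maxHeartbeats 1000000 in
/-- Second-moment integral for the swaps toll of Yaroslavskiy's Quicksort:
`2·E[(D₁ + (D₁+D₂)D₃ + (3/5)·Σ Dⱼ ln Dⱼ)²] = 7/10 − (3/50)π²`. -/
theorem swaps_variance_constant :
    2 * (∫ x in (0:ℝ)..1, ∫ y in (0:ℝ)..(1 - x),
        2 * (x + (x + y) * (1 - x - y) +
            (3 / 5) * (x * Real.log x + y * Real.log y
              + (1 - x - y) * Real.log (1 - x - y))) ^ 2)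
      = 7 / 10 - (3 / 50) * Real.pi ^ 2 := by
  have hEq : Set.EqOn (fun x : ℝ => ∫ y in (0:ℝ)..(1 - x),
        2 * (x + (x + y) * (1 - x - y) +
            (3 / 5) * (x * Real.log x + y * Real.log y
              + (1 - x - y) * Real.log (1 - x - y))) ^ 2)
      (fun x : ℝ =>
        ((13/30 - π^2/25) + (-2 + 3*π^2/25)*x + (33/5 - 3*π^2/25)*x^2
            + (-(22/3) + π^2/25)*x^3 + (27/10)*x^4 + (-(2/5))*x^5)
        + (-(8/25) + (96/25)*x + (-(108/25))*x^2 + (4/5)*x^3) * (x*Real.log x)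
        + (18/25 + (-(18/25))*x) * (x*Real.log x)^2
        + (0 + (12/5)*(1-x) + (-(48/25))*(1-x)^2 + (-(4/5))*(1-x)^3) * ((1-x)*Real.log (1-x))
        + (0 + (18/25)*(1-x)) * ((1-x)*Real.log (1-x))^2
        + (36/25) * (((1:ℝ)*x + (-2)*x^2 + 1*x^3) * Real.log x * Real.log (1-x)))
      (Set.Ioc (0:ℝ) 1) := by
    intro x hx
    rcases eq_or_lt_of_le hx.2 with h1 | h1
    · subst h1
      show (∫ y in (0:ℝ)..(1-1), _) = _
      norm_num [Real.log_one]
      ring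
    · simp only []
      rw [inner_eval x hx.1 h1]
      ring
  rw [intervalIntegral.integral_of_le zero_le_one,
    setIntegral_congr_fun measurableSet_Ioc hEq,
    ← intervalIntegral.integral_of_le zero_le_one]
  have c1 : Continuous fun x : ℝ =>
      ((13/30 - π^2/25) + (-2 + 3*π^2/25)*x + (33/5 - 3*π^2/25)*x^2
        + (-(22/3) + π^2/25)*x^3 + (27/10)*x^4 + (-(2/5))*x^5) := by fun_prop
  have c2 : Continuous fun x : ℝ =>
      (-(8/25) + (96/25)*x + (-(108/25))*x^2 + (4/5)*x^3) * (x*Real.log x) :=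
    (by fun_prop : Continuous fun x : ℝ => -(8/25) + (96/25)*x + (-(108/25))*x^2 + (4/5)*x^3).mul contML
  have c3 : Continuous fun x : ℝ => (18/25 + (-(18/25))*x) * (x*Real.log x)^2 :=
    (by fun_prop : Continuous fun x : ℝ => 18/25 + (-(18/25))*x).mul (contML.pow 2)
  have c4 : Continuous fun x : ℝ =>
      (0 + (12/5)*(1-x) + (-(48/25))*(1-x)^2 + (-(4/5))*(1-x)^3) * ((1-x)*Real.log (1-x)) :=
    (by fun_prop : Continuous fun x : ℝ =>
      0 + (12/5)*(1-x) + (-(48/25))*(1-x)^2 + (-(4/5))*(1-x)^3).mul (contMLc 1)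
  have c5 : Continuous fun x : ℝ => (0 + (18/25)*(1-x)) * ((1-x)*Real.log (1-x))^2 :=
    (by fun_prop : Continuous fun x : ℝ => 0 + (18/25)*(1-x)).mul ((contMLc 1).pow 2)
  have c6eq : (fun x : ℝ => (36/25) * (((1:ℝ)*x + (-2)*x^2 + 1*x^3) * Real.log x * Real.log (1-x)))
      = fun x : ℝ => (36/25) * ((x*Real.log x) * (((1-x)*Real.log (1-x)) * (1-x))) := by
    funext x; ring
  have c6i : IntervalIntegrable
      (fun x : ℝ => (36/25) * (((1:ℝ)*x + (-2)*x^2 + 1*x^3) * Real.log x * Real.log (1-x)))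
      volume 0 1 := by
    rw [c6eq]
    exact (continuous_const.mul (contML.mul ((contMLc 1).mul (by fun_prop)))).intervalIntegrable _ _
  rw [intervalIntegral.integral_add (((((c1.fun_add c2).fun_add c3).fun_add c4).fun_add c5).intervalIntegrable _ _) c6i,
    intervalIntegral.integral_add ((((c1.fun_add c2).fun_add c3).fun_add c4).intervalIntegrable _ _)
      (c5.intervalIntegrable _ _),
    intervalIntegral.integral_add (((c1.fun_add c2).fun_add c3).intervalIntegrable _ _)
      (c4.intervalIntegrable _ _),
    intervalIntegral.integral_add ((c1.fun_add c2).intervalIntegrable _ _) (c3.intervalIntegrable _ _),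
    intervalIntegral.integral_add (c1.intervalIntegrable _ _) (c2.intervalIntegrable _ _)]
  rw [int_poly 1 (13/30 - π^2/25) (-2 + 3*π^2/25) (33/5 - 3*π^2/25) (-(22/3) + π^2/25) (27/10) (-(2/5)),
    int_poly_mul_log 1 (-(8/25)) (96/25) (-(108/25)) (4/5) one_pos,
    int_lin_sq_log 1 (18/25) (-(18/25)) one_pos,
    int_poly_mul_log_reflect 1 0 (12/5) (-(48/25)) (-(4/5)) one_pos,
    int_lin_sq_log_reflect 1 0 (18/25) one_pos,
    intervalIntegral.integral_const_mul,
    K_poly_integral 1 (-2) 1]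
  rw [show (∑' k : ℕ, ((1:ℝ)/((k:ℝ)+3)^2 + (-2)/((k:ℝ)+4)^2 + 1/((k:ℝ)+5)^2)/((k:ℝ)+1))
    = 37/216 - π^2/72 from tsum_outer]
  rw [Real.log_one]
  ring
end

section
/- Let (V_1, …, V_b) be random probabilities (nonnegative, summing to 1 a.s.), let (L_1, …, L_b) be mixed multinomially distributed with n trials and success probabilities (V_1, …, V_b). Then for each i, (L_i/n)·ln(L_i/n) converges in L_2 to V_i·ln(V_i) as n → ∞ (with the convention x ln x = 0 at x = 0). -/
open MeasureTheory Filter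

section Aux

open Finset

lemma mmx_sum_add_single {b : ℕ} (i : Fin b) (k : ℕ) (l : Fin b → ℕ) :
    ∑ j, (l j + if j = i then k else 0) = (∑ j, l j) + k := by
  rw [Finset.sum_add_distrib]; simp

lemma mmx_sum_sub_single {b : ℕ} (i : Fin b) (k : ℕ) (l : Fin b → ℕ) (hk : k ≤ l i) :
    ∑ j, (l j - if j = i then k else 0) + k = ∑ j, l j := by
  rw [← Finset.sum_erase_add Finset.univ (fun j => l j - if j = i then k else 0)
        (Finset.mem_univ i),
      ← Finset.sum_erase_add Finset.univ l (Finset.mem_univ i)]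
  have h1 : ∑ j ∈ Finset.univ.erase i, (l j - if j = i then k else 0)
      = ∑ j ∈ Finset.univ.erase i, l j :=
    Finset.sum_congr rfl fun j hj => by simp [Finset.mem_erase.1 hj |>.1]
  rw [h1]
  have h2 : (if i = i then k else 0) = k := if_pos rfl
  rw [h2]
  omega

lemma mmx_coeff_shift {b : ℕ} (i : Fin b) (k : ℕ) (l : Fin b → ℕ) (hk : k ≤ l i) :
    (l i).descFactorial k * Nat.multinomial Finset.univ l =
      (∑ j, l j).descFactorial k *
        Nat.multinomial Finset.univ (fun j => l j - if j = i then k else 0) := by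
  set l' : Fin b → ℕ := fun j => l j - if j = i then k else 0 with hl'
  have hsum : ∑ j, l' j + k = ∑ j, l j := mmx_sum_sub_single i k l hk
  have hki : k ≤ ∑ j, l j := hk.trans (Finset.single_le_sum (fun j _ => Nat.zero_le (l j)) (Finset.mem_univ i))
  have hprod : ∏ j, (l j).factorial = (l i).descFactorial k * ∏ j, (l' j).factorial := by
    rw [← Finset.prod_erase_mul Finset.univ _ (Finset.mem_univ i),
        ← Finset.prod_erase_mul Finset.univ (fun j => (l' j).factorial) (Finset.mem_univ i)]
    have h1 : ∏ j ∈ Finset.univ.erase i, (l' j).factorial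
        = ∏ j ∈ Finset.univ.erase i, (l j).factorial := by
      refine Finset.prod_congr rfl fun j hj => ?_
      simp [hl', Finset.mem_erase.1 hj |>.1]
    have h2 : l' i = l i - k := by simp [hl']
    rw [h1, h2, ← Nat.factorial_mul_descFactorial hk]
    ring
  have hP : 0 < ∏ j, (l' j).factorial := Finset.prod_pos fun j _ => (l' j).factorial_pos
  refine Nat.eq_of_mul_eq_mul_left hP ?_
  calc (∏ j, (l' j).factorial) * ((l i).descFactorial k * Nat.multinomial Finset.univ l)
      = (∏ j, (l j).factorial) * Nat.multinomial Finset.univ l := by rw [hprod]; ring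
    _ = (∑ j, l j).factorial := Nat.multinomial_spec _ _
    _ = (∑ j, l j - k).factorial * (∑ j, l j).descFactorial k := by
        rw [Nat.factorial_mul_descFactorial hki]
    _ = (∑ j, l' j).factorial * (∑ j, l j).descFactorial k := by
        congr 2; omega
    _ = ((∏ j, (l' j).factorial) * Nat.multinomial Finset.univ l') * (∑ j, l j).descFactorial k := by
        rw [Nat.multinomial_spec]
    _ = (∏ j, (l' j).factorial) * ((∑ j, l j).descFactorial k * Nat.multinomial Finset.univ l') := by
        ring

lemma mmx_reindex_shift {b : ℕ} (i : Fin b) (k n : ℕ) (hkn : k ≤ n) (F : (Fin b → ℕ) → ℝ)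
    (hF : ∀ l ∈ Finset.piAntidiag Finset.univ n, l i < k → F l = 0) :
    ∑ l ∈ Finset.piAntidiag Finset.univ n, F l =
      ∑ l' ∈ Finset.piAntidiag Finset.univ (n - k),
        F (fun j => l' j + if j = i then k else 0) := by
  rw [← Finset.sum_filter_of_ne (p := fun l => k ≤ l i)
      (fun l hl h => by by_contra hc; exact h (hF l hl (Nat.lt_of_not_le hc)))]
  refine Finset.sum_bij' (fun l _ => fun j => l j - if j = i then k else 0)
    (fun l' _ => fun j => l' j + if j = i then k else 0) ?_ ?_ ?_ ?_ ?_
  · intro l hl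
    simp only [Finset.mem_filter, Finset.mem_piAntidiag] at hl
    obtain ⟨⟨hsum, -⟩, hki⟩ := hl
    have hsum2 : ∑ j, l j = n := hsum
    simp only [Finset.mem_piAntidiag]
    refine ⟨?_, fun j _ => Finset.mem_univ j⟩
    show ∑ j, (l j - if j = i then k else 0) = n - k
    have := mmx_sum_sub_single i k l hki
    omega
  · intro l' hl'
    simp only [Finset.mem_piAntidiag] at hl'
    obtain ⟨hsum, -⟩ := hl'
    have hsum2 : ∑ j, l' j = n - k := hsum
    simp only [Finset.mem_filter, Finset.mem_piAntidiag]
    refine ⟨⟨?_, fun j _ => Finset.mem_univ j⟩, by simp⟩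
    show ∑ j, (l' j + if j = i then k else 0) = n
    have := mmx_sum_add_single i k l'
    omega
  · intro l hl
    simp only [Finset.mem_filter, Finset.mem_piAntidiag] at hl
    funext j
    rcases eq_or_ne j i with rfl | h
    · simp; omega
    · simp [h]
  · intro l' _
    funext j
    rcases eq_or_ne j i with rfl | h
    · simp
    · simp [h]
  · intro l hl
    simp only [Finset.mem_filter, Finset.mem_piAntidiag] at hl
    congr 1
    funext j
    rcases eq_or_ne j i with rfl | h
    · simp; omega
    · simp [h]

lemma mmx_moment_id {b : ℕ} (i : Fin b) (v : Fin b → ℝ) (hs : ∑ j, v j = 1) (n k : ℕ) :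
    ∑ l ∈ Finset.piAntidiag Finset.univ n,
        ((l i).descFactorial k : ℝ) * ((Nat.multinomial Finset.univ l : ℝ) * ∏ j, v j ^ l j)
      = (n.descFactorial k : ℝ) * v i ^ k := by
  rcases le_or_gt k n with hkn | hkn
  · rw [mmx_reindex_shift i k n hkn _ (fun l hl hlt => by
      rw [Nat.descFactorial_of_lt hlt]; simp)]
    have key : ∀ l' ∈ Finset.piAntidiag Finset.univ (n - k),
        (((fun j => l' j + if j = i then k else 0) i).descFactorial k : ℝ) *
          ((Nat.multinomial Finset.univ (fun j => l' j + if j = i then k else 0) : ℝ) *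
            ∏ j, v j ^ (l' j + if j = i then k else 0))
        = ((n.descFactorial k : ℝ) * v i ^ k) *
            ((Nat.multinomial Finset.univ l' : ℝ) * ∏ j, v j ^ l' j) := by
      intro l' hl'
      simp only [Finset.mem_piAntidiag] at hl'
      obtain ⟨hsum', -⟩ := hl'
      have hsum2 : ∑ j, l' j = n - k := hsum'
      set l : Fin b → ℕ := fun j => l' j + if j = i then k else 0 with hldef
      have hki : k ≤ l i := by simp [hldef]
      have hsl : ∑ j, l j = n := by
        simp only [hldef]
        show ∑ j, (l' j + if j = i then k else 0) = n
        have := mmx_sum_add_single i k l'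
        omega
      have hmul := mmx_coeff_shift i k l hki
      rw [hsl] at hmul
      have hl'back : (fun j => l j - if j = i then k else 0) = l' := by
        funext j
        rcases eq_or_ne j i with rfl | h
        · simp [hldef]
        · simp [hldef, h]
      rw [hl'back] at hmul
      have hcast : ((l i).descFactorial k : ℝ) * (Nat.multinomial Finset.univ l : ℝ)
          = (n.descFactorial k : ℝ) * (Nat.multinomial Finset.univ l' : ℝ) := by
        exact_mod_cast congrArg (Nat.cast (R := ℝ)) hmul
      have hprod : ∏ j, v j ^ l j = v i ^ k * ∏ j, v j ^ l' j := by
        rw [← Finset.prod_erase_mul Finset.univ _ (Finset.mem_univ i),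
            ← Finset.prod_erase_mul Finset.univ (fun j => v j ^ l' j) (Finset.mem_univ i)]
        have h1 : ∏ j ∈ Finset.univ.erase i, v j ^ l j
            = ∏ j ∈ Finset.univ.erase i, v j ^ l' j :=
          Finset.prod_congr rfl fun j hj => by simp [hldef, Finset.mem_erase.1 hj |>.1]
        rw [h1]
        have : l i = l' i + k := by simp [hldef]
        rw [this, pow_add]; ring
      calc ((l i).descFactorial k : ℝ) * ((Nat.multinomial Finset.univ l : ℝ) * ∏ j, v j ^ l j)
          = (((l i).descFactorial k : ℝ) * (Nat.multinomial Finset.univ l : ℝ)) * ∏ j, v j ^ l j := by ring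
        _ = ((n.descFactorial k : ℝ) * (Nat.multinomial Finset.univ l' : ℝ)) * (v i ^ k * ∏ j, v j ^ l' j) := by
            rw [hcast, hprod]
        _ = ((n.descFactorial k : ℝ) * v i ^ k) * ((Nat.multinomial Finset.univ l' : ℝ) * ∏ j, v j ^ l' j) := by ring
    rw [Finset.sum_congr rfl key, ← Finset.mul_sum]
    have := Finset.sum_pow_eq_sum_piAntidiag (Finset.univ : Finset (Fin b)) v (n - k)
    rw [hs] at this
    rw [← this, one_pow, mul_one]
  · have hz : ∀ l ∈ Finset.piAntidiag Finset.univ n,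
        ((l i).descFactorial k : ℝ) * ((Nat.multinomial Finset.univ l : ℝ) * ∏ j, v j ^ l j) = 0 := by
      intro l hl
      simp only [Finset.mem_piAntidiag] at hl
      have : l i ≤ n := hl.1 ▸ Finset.single_le_sum (fun j _ => Nat.zero_le (l j)) (Finset.mem_univ i)
      rw [Nat.descFactorial_of_lt (lt_of_le_of_lt this hkn)]
      simp
    rw [Finset.sum_congr rfl hz, Finset.sum_const, smul_zero,
        Nat.descFactorial_of_lt hkn]
    simp

lemma mmx_descFactorial_two_cast (m : ℕ) : (m.descFactorial 2 : ℝ) = (m : ℝ) * ((m : ℝ) - 1) := by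
  cases m with
  | zero => simp
  | succ m =>
    rw [Nat.descFactorial_succ, Nat.descFactorial_one]
    push_cast
    ring

lemma mmx_variance_id {b : ℕ} (i : Fin b) (v : Fin b → ℝ) (hs : ∑ j, v j = 1) (n : ℕ) :
    ∑ l ∈ Finset.piAntidiag Finset.univ n,
        ((Nat.multinomial Finset.univ l : ℝ) * ∏ j, v j ^ l j) * ((l i : ℝ) - n * v i) ^ 2
      = n * v i * (1 - v i) := by
  have h2 := mmx_moment_id i v hs n 2
  have h1 := mmx_moment_id i v hs n 1
  have h0 := mmx_moment_id i v hs n 0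
  simp only [Nat.descFactorial_one, Nat.descFactorial_zero, Nat.cast_one, one_mul, pow_one,
    pow_zero, mul_one] at h1 h0
  have key : ∀ l ∈ Finset.piAntidiag Finset.univ n,
      ((Nat.multinomial Finset.univ l : ℝ) * ∏ j, v j ^ l j) * ((l i : ℝ) - n * v i) ^ 2
      = ((l i).descFactorial 2 : ℝ) * ((Nat.multinomial Finset.univ l : ℝ) * ∏ j, v j ^ l j)
        + (1 - 2 * (n : ℝ) * v i) * ((l i : ℝ) * ((Nat.multinomial Finset.univ l : ℝ) * ∏ j, v j ^ l j))
        + ((n : ℝ) * v i) ^ 2 * ((Nat.multinomial Finset.univ l : ℝ) * ∏ j, v j ^ l j) := by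
    intro l _
    rw [mmx_descFactorial_two_cast]
    ring
  rw [Finset.sum_congr rfl key]
  rw [Finset.sum_add_distrib, Finset.sum_add_distrib, ← Finset.mul_sum, ← Finset.mul_sum]
  rw [h2, h1, h0, mmx_descFactorial_two_cast]
  ring

lemma mmx_xlogx_abs_le_one {x : ℝ} (h0 : 0 ≤ x) (h1 : x ≤ 1) : |x * Real.log x| ≤ 1 := by
  rcases eq_or_lt_of_le h0 with rfl | hx
  · simp
  · have hlog : Real.log x ≤ 0 := Real.log_nonpos (le_of_lt hx) h1
    have hineq : Real.log x⁻¹ ≤ x⁻¹ - 1 := Real.log_le_sub_one_of_pos (by positivity)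
    rw [Real.log_inv] at hineq
    have : -(x * Real.log x) ≤ 1 - x := by
      have := mul_le_mul_of_nonneg_left hineq (le_of_lt hx)
      rw [mul_sub, mul_inv_cancel₀ (ne_of_gt hx)] at this
      nlinarith
    rw [abs_of_nonpos (mul_nonpos_of_nonneg_of_nonpos h0 hlog)]
    linarith

lemma mmx_xlogx_unif (ε : ℝ) (hε : 0 < ε) : ∃ δ > 0, ∀ x ∈ Set.Icc (0:ℝ) 1, ∀ y ∈ Set.Icc (0:ℝ) 1,
    |x - y| ≤ δ → |x * Real.log x - y * Real.log y| ≤ ε := by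
  have huc : UniformContinuousOn (fun x => x * Real.log x) (Set.Icc (0:ℝ) 1) :=
    isCompact_Icc.uniformContinuousOn_of_continuous Real.continuous_mul_log.continuousOn
  rw [Metric.uniformContinuousOn_iff_le] at huc
  obtain ⟨δ, hδ, h⟩ := huc ε hε
  exact ⟨δ, hδ, fun x hx y hy hxy => by
    have := h x hx y hy (by rwa [Real.dist_eq])
    rwa [Real.dist_eq] at this⟩

lemma mmx_integrable_of_ae_bound {Ω : Type*} [MeasurableSpace Ω] {μ : Measure Ω}
    [IsFiniteMeasure μ] {f : Ω → ℝ} (hf : AEStronglyMeasurable f μ) {c : ℝ}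
    (h : ∀ᵐ ω ∂μ, |f ω| ≤ c) : Integrable f μ :=
  ⟨hf, HasFiniteIntegral.of_bounded (C := c) (h.mono fun ω hω => by
    simpa [Real.norm_eq_abs] using hω)⟩

lemma mmx_ind_measurable {Ω : Type*} [MeasurableSpace Ω] {b : ℕ} {Ln : Ω → Fin b → ℕ}
    (hLn : Measurable Ln) (l : Fin b → ℕ) :
    Measurable (fun ω => if Ln ω = l then (1:ℝ) else 0) := by
  have hset : MeasurableSet {ω | Ln ω = l} := by
    have : {ω | Ln ω = l} = ⋂ j, (fun ω => Ln ω j) ⁻¹' {l j} := by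
      ext ω; simp [funext_iff]
    rw [this]
    exact MeasurableSet.iInter fun j =>
      ((measurable_pi_apply j).comp hLn) (measurableSet_singleton (l j))
  have : (fun ω => if Ln ω = l then (1:ℝ) else 0)
      = Set.indicator {ω | Ln ω = l} (fun _ => (1:ℝ)) := by
    funext ω; by_cases hω : Ln ω = l <;> simp [Set.indicator, hω]
  rw [this]
  exact measurable_const.indicator hset

lemma mmx_sq_bound {a nn v : ℝ} (ha : 0 ≤ a) (hn : 0 ≤ nn) (h0 : 0 ≤ v) (h1 : v ≤ 1) :
    (a - nn * v) ^ 2 ≤ (a + nn) ^ 2 := by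
  nlinarith [mul_nonneg ha hn, mul_nonneg (mul_nonneg ha hn) h0,
    mul_nonneg (mul_nonneg (mul_nonneg hn hn) (by linarith : (0:ℝ) ≤ 1 - v))
      (by linarith : (0:ℝ) ≤ 1 + v)]

lemma mmx_sq_le_four {p q : ℝ} (hp : |p| ≤ 1) (hq : |q| ≤ 1) : (p - q) ^ 2 ≤ 4 := by
  have h1 := abs_le.1 hp
  have h2 := abs_le.1 hq
  nlinarith [h1.1, h1.2, h2.1, h2.2]

/-- Key exchange lemma: integrating an indicator of `L = l` against a function of `V`. -/
lemma mmx_exchange {Ω : Type*} [MeasurableSpace Ω] (μ : Measure Ω) [IsProbabilityMeasure μ]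
    {b : ℕ} (V : Ω → Fin b → ℝ) (Ln : Ω → Fin b → ℕ)
    (hVmeas : Measurable V) (hLn : Measurable Ln) (n : ℕ) (l : Fin b → ℕ)
    (hcl : μ[(fun ω => if Ln ω = l then (1 : ℝ) else 0) |
          MeasurableSpace.comap V inferInstance]
        =ᵐ[μ] fun ω =>
          if ∑ j, l j = n then
            (Nat.multinomial Finset.univ l : ℝ) * ∏ j, V ω j ^ l j
          else 0)
    (h : (Fin b → ℝ) → ℝ) (hh : Measurable h) (c : ℝ) (hc : ∀ᵐ ω ∂μ, |h (V ω)| ≤ c) :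
    ∫ ω, (if Ln ω = l then (1:ℝ) else 0) * h (V ω) ∂μ
      = ∫ ω, (if ∑ j, l j = n then
            (Nat.multinomial Finset.univ l : ℝ) * ∏ j, V ω j ^ l j else 0) * h (V ω) ∂μ := by
  have hm : MeasurableSpace.comap V inferInstance ≤ _ := hVmeas.comap_le
  haveI : SigmaFinite (μ.trim hm) := inferInstance
  have hVm : @Measurable Ω (Fin b → ℝ) (MeasurableSpace.comap V inferInstance) _ V :=
    fun s hs => ⟨s, hs, rfl⟩
  have hhV : StronglyMeasurable[MeasurableSpace.comap V inferInstance] fun ω => h (V ω) :=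
    (hh.comp hVm).stronglyMeasurable
  set ind : Ω → ℝ := fun ω => if Ln ω = l then (1:ℝ) else 0 with hinddef
  have hindmeas : Measurable ind := mmx_ind_measurable hLn l
  have hindbd : ∀ ω, |ind ω| ≤ 1 := fun ω => by
    by_cases hω : Ln ω = l <;> simp [hinddef, hω]
  have hindint : Integrable ind μ :=
    mmx_integrable_of_ae_bound hindmeas.aestronglyMeasurable (ae_of_all _ hindbd)
  have hprodint : Integrable (fun ω => h (V ω) * ind ω) μ := by
    refine mmx_integrable_of_ae_bound
      (((hh.comp hVmeas).mul hindmeas).aestronglyMeasurable) (c := |c|) ?_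
    filter_upwards [hc] with ω hω
    calc |h (V ω) * ind ω| = |h (V ω)| * |ind ω| := abs_mul _ _
      _ ≤ |c| * 1 := mul_le_mul (hω.trans (le_abs_self c)) (hindbd ω) (abs_nonneg _) (abs_nonneg _)
      _ = |c| := mul_one _
  have hcnorm : ∀ᵐ ω ∂μ, ‖h (V ω)‖ ≤ c := hc.mono fun ω hω => by rwa [Real.norm_eq_abs]
  have hpull := condExp_stronglyMeasurable_mul_of_bound hm hhV hindint c hcnorm
  calc ∫ ω, ind ω * h (V ω) ∂μ
      = ∫ ω, ((fun ω => h (V ω)) * ind) ω ∂μ := by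
        refine integral_congr_ae (ae_of_all _ fun ω => ?_)
        simp [mul_comm]
    _ = ∫ ω, (μ[(fun ω => h (V ω)) * ind | MeasurableSpace.comap V inferInstance]) ω ∂μ :=
        (integral_condExp hm).symm
    _ = ∫ ω, ((fun ω => h (V ω)) * μ[ind | MeasurableSpace.comap V inferInstance]) ω ∂μ :=
        integral_congr_ae hpull
    _ = ∫ ω, (if ∑ j, l j = n then
            (Nat.multinomial Finset.univ l : ℝ) * ∏ j, V ω j ^ l j else 0) * h (V ω) ∂μ := by
        refine integral_congr_ae ?_
        filter_upwards [hcl] with ω hω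
        simp only [Pi.mul_apply]
        rw [hω, mul_comm]

end Aux

/-- Let `(V₁,…,V_b)` be random probabilities and `(L₁,…,L_b)` be mixed multinomially
distributed with `n` trials and success probabilities `V` (stated via the conditional
expectation given `σ(V)` of indicators). Then for each `i`,
`(Lᵢ/n)·ln(Lᵢ/n) → Vᵢ·ln(Vᵢ)` in `L₂` as `n → ∞` (with `x ln x = 0` at `x = 0`). -/
theorem mixed_multinomial_xlnx_L2 {Ω : Type*} [MeasurableSpace Ω]
    (μ : Measure Ω) [IsProbabilityMeasure μ]
    (b : ℕ) (V : Ω → Fin b → ℝ) (L : ℕ → Ω → Fin b → ℕ)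
    (hVmeas : Measurable V) (hLmeas : ∀ n, Measurable (L n))
    (hVnonneg : ∀ᵐ ω ∂μ, ∀ i, 0 ≤ V ω i)
    (hVsum : ∀ᵐ ω ∂μ, ∑ i, V ω i = 1)
    (hcond : ∀ (n : ℕ) (l : Fin b → ℕ),
      μ[(fun ω => if L n ω = l then (1 : ℝ) else 0) |
          MeasurableSpace.comap V inferInstance]
        =ᵐ[μ] fun ω =>
          if ∑ i, l i = n then
            (Nat.multinomial Finset.univ l : ℝ) * ∏ i, V ω i ^ l i
          else 0) :
    ∀ i : Fin b,
      Tendsto (fun n : ℕ =>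
          ∫ ω, ((L n ω i : ℝ) / n * Real.log ((L n ω i : ℝ) / n)
              - V ω i * Real.log (V ω i)) ^ 2 ∂μ)
        atTop (nhds 0) := by
  intro i
  -- basic measurability
  have hmeasVi : Measurable fun ω => V ω i := (measurable_pi_apply i).comp hVmeas
  have hmeasLi : ∀ n, Measurable fun ω => (L n ω i : ℝ) := fun n =>
    measurable_from_top.comp ((measurable_pi_apply i).comp (hLmeas n))
  -- V i is in [0,1] a.e.
  have hVi01 : ∀ᵐ ω ∂μ, 0 ≤ V ω i ∧ V ω i ≤ 1 := by
    filter_upwards [hVnonneg, hVsum] with ω h1 h2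
    exact ⟨h1 i, h2 ▸ Finset.single_le_sum (fun j _ => h1 j) (Finset.mem_univ i)⟩
  -- a.s. the counts sum to n
  have hsumL : ∀ n : ℕ, ∀ᵐ ω ∂μ, ∑ j, L n ω j = n := by
    intro n
    have hae : ∀ᵐ ω ∂μ, ∀ l : Fin b → ℕ, ∑ j, l j ≠ n → L n ω ≠ l := by
      rw [ae_all_iff]
      intro l
      by_cases hl : ∑ j, l j = n
      · filter_upwards with ω h; exact absurd hl h
      · have h0 := mmx_exchange μ V (L n) hVmeas (hLmeas n) n l (hcond n l)
          (fun _ => (1:ℝ)) measurable_const 1 (ae_of_all _ fun ω => by simp)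
        simp only [mul_one, if_neg hl] at h0
        rw [integral_zero] at h0
        have hindint : Integrable (fun ω => if L n ω = l then (1:ℝ) else 0) μ :=
          mmx_integrable_of_ae_bound (mmx_ind_measurable (hLmeas n) l).aestronglyMeasurable
            (c := 1) (ae_of_all _ fun ω => by by_cases hω : L n ω = l <;> simp [hω])
        have hzero := (integral_eq_zero_iff_of_nonneg
          (fun ω => by by_cases hω : L n ω = l <;> simp [hω]) hindint).1 h0
        filter_upwards [hzero] with ω hω _ hLl
        simp only [hLl, if_pos rfl] at hω
        exact one_ne_zero hω
    filter_upwards [hae] with ω hω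
    by_contra hne
    exact hω (L n ω) hne rfl
  -- variance bound
  have hvar : ∀ n : ℕ, ∫ ω, ((L n ω i : ℝ) - n * V ω i) ^ 2 ∂μ ≤ (n : ℝ) / 4 := by
    intro n
    set A := Finset.piAntidiag (Finset.univ : Finset (Fin b)) n with hA
    -- integrability of each indicator term
    have hintl : ∀ l : Fin b → ℕ, Integrable
        (fun ω => (if L n ω = l then (1:ℝ) else 0) * ((l i : ℝ) - n * V ω i) ^ 2) μ := by
      intro l
      refine mmx_integrable_of_ae_bound
        (((mmx_ind_measurable (hLmeas n) l).mul
          (((measurable_const.sub (measurable_const.mul hmeasVi))).pow measurable_const)).aestronglyMeasurable)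
        (c := ((l i : ℝ) + n) ^ 2) ?_
      filter_upwards [hVi01] with ω hω
      have h1 : |(if L n ω = l then (1:ℝ) else 0)| ≤ 1 := by
        by_cases hc : L n ω = l <;> simp [hc]
      have h2 : |((l i : ℝ) - n * V ω i) ^ 2| ≤ ((l i : ℝ) + n) ^ 2 := by
        rw [abs_of_nonneg (sq_nonneg _)]
        exact mmx_sq_bound (Nat.cast_nonneg _) (Nat.cast_nonneg _) hω.1 hω.2
      calc |(if L n ω = l then (1:ℝ) else 0) * ((l i : ℝ) - n * V ω i) ^ 2|
          = |(if L n ω = l then (1:ℝ) else 0)| * |((l i : ℝ) - n * V ω i) ^ 2| := abs_mul _ _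
        _ ≤ 1 * (((l i : ℝ) + n) ^ 2) := mul_le_mul h1 h2 (abs_nonneg _) zero_le_one
        _ = ((l i : ℝ) + n) ^ 2 := one_mul _
    have hintr : ∀ l : Fin b → ℕ, Integrable
        (fun ω => (if ∑ j, l j = n then
            (Nat.multinomial Finset.univ l : ℝ) * ∏ j, V ω j ^ l j else 0)
          * ((l i : ℝ) - n * V ω i) ^ 2) μ := by
      intro l
      by_cases hl : ∑ j, l j = n
      · simp only [if_pos hl]
        have hmeas : Measurable (fun ω =>
            ((Nat.multinomial Finset.univ l : ℝ) * ∏ j, V ω j ^ l j)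
              * ((l i : ℝ) - n * V ω i) ^ 2) := by
          refine ((measurable_const.mul (Finset.measurable_prod _ fun j _ =>
            ((measurable_pi_apply j).comp hVmeas).pow measurable_const)).mul
            ((measurable_const.sub (measurable_const.mul hmeasVi)).pow measurable_const))
        refine mmx_integrable_of_ae_bound hmeas.aestronglyMeasurable
          (c := (Nat.multinomial Finset.univ l : ℝ) * ((l i : ℝ) + n) ^ 2) ?_
        filter_upwards [hVnonneg, hVsum, hVi01] with ω h1 h2 h3
        have hVle1 : ∀ j, V ω j ≤ 1 := fun j =>
          h2 ▸ Finset.single_le_sum (fun j' _ => h1 j') (Finset.mem_univ j)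
        have hp0 : 0 ≤ ∏ j, V ω j ^ l j :=
          Finset.prod_nonneg fun j _ => pow_nonneg (h1 j) _
        have hp1 : ∏ j, V ω j ^ l j ≤ 1 :=
          Finset.prod_le_one (fun j _ => pow_nonneg (h1 j) _)
            (fun j _ => pow_le_one₀ (h1 j) (hVle1 j))
        have hm0 : (0:ℝ) ≤ (Nat.multinomial Finset.univ l : ℝ) := Nat.cast_nonneg _
        have h2' : ((l i : ℝ) - n * V ω i) ^ 2 ≤ ((l i : ℝ) + n) ^ 2 :=
          mmx_sq_bound (Nat.cast_nonneg _) (Nat.cast_nonneg _) h3.1 h3.2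
        rw [abs_of_nonneg (mul_nonneg (mul_nonneg hm0 hp0) (sq_nonneg _))]
        have hle : (Nat.multinomial Finset.univ l : ℝ) * ∏ j, V ω j ^ l j
            ≤ (Nat.multinomial Finset.univ l : ℝ) := by
          calc (Nat.multinomial Finset.univ l : ℝ) * ∏ j, V ω j ^ l j
              ≤ (Nat.multinomial Finset.univ l : ℝ) * 1 := mul_le_mul_of_nonneg_left hp1 hm0
            _ = (Nat.multinomial Finset.univ l : ℝ) := mul_one _
        exact mul_le_mul hle h2' (sq_nonneg _) hm0
      · simp only [if_neg hl, zero_mul]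
        exact integrable_zero _ _ _
    have step1 : ∫ ω, ((L n ω i : ℝ) - n * V ω i) ^ 2 ∂μ
        = ∑ l ∈ A, ∫ ω, (if L n ω = l then (1:ℝ) else 0) * ((l i : ℝ) - n * V ω i) ^ 2 ∂μ := by
      rw [← integral_finset_sum A fun l _ => hintl l]
      refine integral_congr_ae ?_
      filter_upwards [hsumL n] with ω hω
      have hmem : L n ω ∈ A := by
        simp only [hA, Finset.mem_piAntidiag]
        exact ⟨hω, fun j _ => Finset.mem_univ j⟩
      have : ∑ l ∈ A, (if L n ω = l then (1:ℝ) else 0) * ((l i : ℝ) - n * V ω i) ^ 2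
          = ∑ l ∈ A, (if L n ω = l then ((l i : ℝ) - n * V ω i) ^ 2 else 0) := by
        refine Finset.sum_congr rfl fun l _ => ?_
        by_cases hc : L n ω = l <;> simp [hc]
      rw [this, Finset.sum_ite_eq A (L n ω) (fun l => ((l i : ℝ) - n * V ω i) ^ 2),
        if_pos hmem]
    have step2 : ∑ l ∈ A, ∫ ω, (if L n ω = l then (1:ℝ) else 0) * ((l i : ℝ) - n * V ω i) ^ 2 ∂μ
        = ∑ l ∈ A, ∫ ω, (if ∑ j, l j = n then
            (Nat.multinomial Finset.univ l : ℝ) * ∏ j, V ω j ^ l j else 0)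
            * ((l i : ℝ) - n * V ω i) ^ 2 ∂μ := by
      refine Finset.sum_congr rfl fun l _ => ?_
      exact mmx_exchange μ V (L n) hVmeas (hLmeas n) n l (hcond n l)
        (fun v => ((l i : ℝ) - n * v i) ^ 2)
        ((measurable_const.sub (measurable_const.mul (measurable_pi_apply i))).pow
          measurable_const)
        (((l i : ℝ) + n) ^ 2)
        (by
          filter_upwards [hVi01] with ω hω
          rw [abs_of_nonneg (sq_nonneg _)]
          exact mmx_sq_bound (Nat.cast_nonneg _) (Nat.cast_nonneg _) hω.1 hω.2)
    have step3 : ∑ l ∈ A, ∫ ω, (if ∑ j, l j = n then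
            (Nat.multinomial Finset.univ l : ℝ) * ∏ j, V ω j ^ l j else 0)
            * ((l i : ℝ) - n * V ω i) ^ 2 ∂μ
        = ∫ ω, (n:ℝ) * V ω i * (1 - V ω i) ∂μ := by
      rw [← integral_finset_sum A fun l _ => hintr l]
      refine integral_congr_ae ?_
      filter_upwards [hVsum] with ω hω
      have : ∑ l ∈ A, (if ∑ j, l j = n then
            (Nat.multinomial Finset.univ l : ℝ) * ∏ j, V ω j ^ l j else 0)
            * ((l i : ℝ) - n * V ω i) ^ 2
          = ∑ l ∈ A, ((Nat.multinomial Finset.univ l : ℝ) * ∏ j, V ω j ^ l j)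
            * ((l i : ℝ) - n * V ω i) ^ 2 := by
        refine Finset.sum_congr rfl fun l hl => ?_
        have : ∑ j, l j = n := by
          have := Finset.mem_piAntidiag.1 (hA ▸ hl)
          exact this.1
        rw [if_pos this]
      rw [this]
      exact mmx_variance_id i (V ω) hω n
    have step4 : ∫ ω, (n:ℝ) * V ω i * (1 - V ω i) ∂μ ≤ (n:ℝ) / 4 := by
      have hint : Integrable (fun ω => (n:ℝ) * V ω i * (1 - V ω i)) μ := by
        refine mmx_integrable_of_ae_bound
          (((measurable_const.mul hmeasVi).mul (measurable_const.sub hmeasVi)).aestronglyMeasurable)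
          (c := (n:ℝ)) ?_
        filter_upwards [hVi01] with ω hω
        have hnn : (0:ℝ) ≤ n := Nat.cast_nonneg _
        rw [abs_of_nonneg (mul_nonneg (mul_nonneg hnn hω.1)
          (by linarith [hω.2] : (0:ℝ) ≤ 1 - V ω i))]
        nlinarith [mul_nonneg hnn (sq_nonneg (V ω i - 1/2)), hω.1, hω.2]
      have hle : (fun ω => (n:ℝ) * V ω i * (1 - V ω i)) ≤ᵐ[μ] fun _ => (n:ℝ)/4 := by
        filter_upwards [hVi01] with ω hω
        have hnn : (0:ℝ) ≤ n := Nat.cast_nonneg _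
        nlinarith [mul_nonneg hnn (sq_nonneg (V ω i - 1/2))]
      calc ∫ ω, (n:ℝ) * V ω i * (1 - V ω i) ∂μ
          ≤ ∫ _, (n:ℝ)/4 ∂μ := integral_mono_ae hint (integrable_const _) hle
        _ = (n:ℝ)/4 := by simp
    calc ∫ ω, ((L n ω i : ℝ) - n * V ω i) ^ 2 ∂μ
        = ∫ ω, (n:ℝ) * V ω i * (1 - V ω i) ∂μ := by rw [step1, step2, step3]
      _ ≤ (n:ℝ)/4 := step4
  -- L2 bound on (L/n - V)
  have hchi : ∀ n : ℕ, 1 ≤ n → ∫ ω, ((L n ω i : ℝ)/n - V ω i) ^ 2 ∂μ ≤ 1 / (4 * n) := by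
    intro n hn
    have hn0 : (n:ℝ) ≠ 0 := Nat.cast_ne_zero.2 (by omega)
    have hpt : (fun ω => ((L n ω i : ℝ)/n - V ω i) ^ 2)
        = fun ω => (1/(n:ℝ)^2) * ((L n ω i : ℝ) - n * V ω i) ^ 2 := by
      funext ω
      rw [show (L n ω i : ℝ)/n - V ω i = ((L n ω i : ℝ) - n * V ω i) * (1/(n:ℝ)) by
        field_simp]
      rw [mul_pow]
      ring
    rw [hpt, integral_const_mul]
    have := hvar n
    calc (1/(n:ℝ)^2) * ∫ ω, ((L n ω i : ℝ) - n * V ω i) ^ 2 ∂μ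
        ≤ (1/(n:ℝ)^2) * ((n:ℝ)/4) := mul_le_mul_of_nonneg_left this (by positivity)
      _ = 1 / (4 * (n:ℝ)) := by
          rw [div_mul_div_comm, one_mul]
          rw [div_eq_div_iff (by positivity) (by positivity)]
          ring
  -- main limit
  rw [Metric.tendsto_atTop]
  intro ε hε
  obtain ⟨δ, hδ, hunif⟩ := mmx_xlogx_unif (Real.sqrt (ε/4)) (Real.sqrt_pos.2 (by linarith))
  set N : ℕ := ⌈(4:ℝ)/(δ^2 * ε)⌉₊ + 1 with hN
  refine ⟨N, fun n hn => ?_⟩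
  have hn1 : 1 ≤ n := le_trans (by omega) hn
  have hn0 : (n:ℝ) ≠ 0 := Nat.cast_ne_zero.2 (by omega)
  have hnpos : (0:ℝ) < n := by positivity
  -- a.e. bounds
  have hX01 : ∀ᵐ ω ∂μ, 0 ≤ (L n ω i : ℝ)/n ∧ (L n ω i : ℝ)/n ≤ 1 := by
    filter_upwards [hsumL n] with ω hω
    have hle : L n ω i ≤ n :=
      (Finset.single_le_sum (f := L n ω) (fun j _ => Nat.zero_le _) (Finset.mem_univ i)).trans hω.le
    constructor
    · positivity
    · rw [div_le_one hnpos]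
      exact_mod_cast hle
  -- pointwise bound
  have hptbd : ∀ᵐ ω ∂μ, ((L n ω i : ℝ) / n * Real.log ((L n ω i : ℝ) / n)
        - V ω i * Real.log (V ω i)) ^ 2
      ≤ ε/4 + (4/δ^2) * ((L n ω i : ℝ)/n - V ω i) ^ 2 := by
    filter_upwards [hX01, hVi01] with ω hx hy
    set x := (L n ω i : ℝ)/n
    set y := V ω i
    have hxm : x ∈ Set.Icc (0:ℝ) 1 := ⟨hx.1, hx.2⟩
    have hym : y ∈ Set.Icc (0:ℝ) 1 := ⟨hy.1, hy.2⟩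
    by_cases hcl : |x - y| ≤ δ
    · have h1 := hunif x hxm y hym hcl
      have h2 : (x * Real.log x - y * Real.log y)^2 ≤ (Real.sqrt (ε/4))^2 := by
        rw [← sq_abs]
        exact pow_le_pow_left₀ (abs_nonneg _) h1 2
      rw [Real.sq_sqrt (by linarith)] at h2
      have h3 : 0 ≤ (4/δ^2) * (x - y)^2 := by positivity
      linarith
    · push_neg at hcl
      have hfx := mmx_xlogx_abs_le_one hx.1 hx.2
      have hfy := mmx_xlogx_abs_le_one hy.1 hy.2
      have h1 : (x * Real.log x - y * Real.log y)^2 ≤ 4 := mmx_sq_le_four hfx hfy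
      have h2 : 4 ≤ (4/δ^2) * (x - y)^2 := by
        have : δ^2 ≤ (x - y)^2 := by
          rw [← sq_abs (x - y)]
          exact pow_le_pow_left₀ (le_of_lt hδ) (le_of_lt hcl) 2
        rw [div_mul_eq_mul_div, le_div_iff₀ (by positivity)]
        nlinarith
      have : 0 ≤ ε/4 := by linarith
      linarith
  -- integrability
  have hmeasdiff : Measurable fun ω => ((L n ω i : ℝ) / n * Real.log ((L n ω i : ℝ) / n)
      - V ω i * Real.log (V ω i)) ^ 2 := by
    have h1 : Measurable fun ω => (L n ω i : ℝ)/n := (hmeasLi n).div measurable_const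
    have h2 : Measurable fun ω => (L n ω i : ℝ)/n * Real.log ((L n ω i : ℝ)/n) :=
      Real.continuous_mul_log.measurable.comp h1
    have h3 : Measurable fun ω => V ω i * Real.log (V ω i) :=
      Real.continuous_mul_log.measurable.comp hmeasVi
    exact (h2.sub h3).pow measurable_const
  have hintdiff : Integrable (fun ω => ((L n ω i : ℝ) / n * Real.log ((L n ω i : ℝ) / n)
      - V ω i * Real.log (V ω i)) ^ 2) μ := by
    refine mmx_integrable_of_ae_bound hmeasdiff.aestronglyMeasurable (c := 4) ?_
    filter_upwards [hX01, hVi01] with ω hx hy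
    have hfx := mmx_xlogx_abs_le_one hx.1 hx.2
    have hfy := mmx_xlogx_abs_le_one hy.1 hy.2
    rw [abs_of_nonneg (sq_nonneg _)]
    exact mmx_sq_le_four hfx hfy
  have hintchi : Integrable (fun ω => ((L n ω i : ℝ)/n - V ω i) ^ 2) μ := by
    refine mmx_integrable_of_ae_bound
      ((((hmeasLi n).div measurable_const).sub hmeasVi).pow measurable_const).aestronglyMeasurable
      (c := 4) ?_
    filter_upwards [hX01, hVi01] with ω hx hy
    rw [abs_of_nonneg (sq_nonneg _)]
    exact mmx_sq_le_four (abs_le.2 ⟨by linarith [hx.1], hx.2⟩)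
      (abs_le.2 ⟨by linarith [hy.1], hy.2⟩)
  have hintrhs : Integrable (fun ω => ε/4 + (4/δ^2) * ((L n ω i : ℝ)/n - V ω i) ^ 2) μ :=
    (integrable_const _).add (hintchi.const_mul _)
  -- integral bound
  have hIb : ∫ ω, ((L n ω i : ℝ) / n * Real.log ((L n ω i : ℝ) / n)
        - V ω i * Real.log (V ω i)) ^ 2 ∂μ
      ≤ ε/4 + (4/δ^2) * (1/(4*n)) := by
    calc ∫ ω, ((L n ω i : ℝ) / n * Real.log ((L n ω i : ℝ) / n)
          - V ω i * Real.log (V ω i)) ^ 2 ∂μ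
        ≤ ∫ ω, (ε/4 + (4/δ^2) * ((L n ω i : ℝ)/n - V ω i) ^ 2) ∂μ :=
          integral_mono_ae hintdiff hintrhs hptbd
      _ = ε/4 + (4/δ^2) * ∫ ω, ((L n ω i : ℝ)/n - V ω i) ^ 2 ∂μ := by
          rw [integral_add (integrable_const _) (hintchi.const_mul _),
            integral_const, integral_const_mul]
          simp
      _ ≤ ε/4 + (4/δ^2) * (1/(4*n)) := by
          have := hchi n hn1
          have h0 : (0:ℝ) ≤ 4/δ^2 := by positivity
          nlinarith
  -- conclude
  have hnonneg : 0 ≤ ∫ ω, ((L n ω i : ℝ) / n * Real.log ((L n ω i : ℝ) / n)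
      - V ω i * Real.log (V ω i)) ^ 2 ∂μ := integral_nonneg fun ω => sq_nonneg _
  rw [Real.dist_eq, sub_zero, abs_of_nonneg hnonneg]
  -- 4/δ² * (1/(4n)) = 1/(δ² n) ≤ ε/4 for n ≥ N
  have hNbd : (4:ℝ)/(δ^2 * ε) < N := by
    have : (4:ℝ)/(δ^2 * ε) ≤ ⌈(4:ℝ)/(δ^2 * ε)⌉₊ := Nat.le_ceil _
    have hlt : (⌈(4:ℝ)/(δ^2 * ε)⌉₊ : ℝ) < N := by
      rw [hN]; exact_mod_cast Nat.lt_succ_self _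
    linarith
  have hnN : (4:ℝ)/(δ^2 * ε) < n := lt_of_lt_of_le hNbd (by exact_mod_cast hn)
  have hδε : (0:ℝ) < δ^2 * ε := by positivity
  have h1 : (4:ℝ) < δ^2 * ε * n := by
    have h2 := (div_lt_iff₀ hδε).1 hnN
    nlinarith
  have hsecond : (4/δ^2) * (1/(4*(n:ℝ))) ≤ ε/4 := by
    rw [div_mul_div_comm]
    rw [div_le_div_iff₀ (by positivity) (by norm_num)]
    nlinarith [h1]
  calc ∫ ω, ((L n ω i : ℝ) / n * Real.log ((L n ω i : ℝ) / n)
        - V ω i * Real.log (V ω i)) ^ 2 ∂μ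
      ≤ ε/4 + (4/δ^2) * (1/(4*n)) := hIb
    _ ≤ ε/4 + ε/4 := by linarith
    _ < ε := by linarith
end
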